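/- arXiv:2605.22124 — 9 statements merged into one kernel-verified Lean document; each statement's English description precedes it below -/
import Mathlib

section
/- Let f(η) = −log(1−|η|) − |η| for η ∈ (−1,1). Then for every real x, the supremum over η ∈ (−1,1) of η·x − f(η) equals |x| − log(|x|+1). -/
/-- The Fenchel conjugate of `f(η) = −log(1−|η|) − |η|` over `η ∈ (−1,1)`:
for every real `x`, `sup_{−1<η<1} (η·x − f(η)) = |x| − log(|x|+1)`. -/
theorem fenchel_conjugate_log_barrier (x : ℝ) :
    sSup ((fun η : ℝ => η * x - (-Real.log (1 - |η|) - |η|)) '' Set.Ioo (-1 : ℝ) 1)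
      = |x| - Real.log (|x| + 1) := by
  have hx1 : (0:ℝ) < |x| + 1 := by positivity
  have hxabs : (0:ℝ) ≤ |x| := abs_nonneg x
  apply IsGreatest.csSup_eq
  constructor
  · refine ⟨x / (|x| + 1), ?_, ?_⟩
    · have habs : |x / (|x| + 1)| < 1 := by
        rw [abs_div, abs_of_pos hx1]
        exact (div_lt_one hx1).mpr (by linarith)
      exact abs_lt.mp habs
    · have habs : |x / (|x| + 1)| = |x| / (|x| + 1) := by
        rw [abs_div, abs_of_pos hx1]
      simp only [habs]
      have h1 : 1 - |x| / (|x| + 1) = 1 / (|x| + 1) := by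
        field_simp
        ring
      rw [h1, Real.log_div one_ne_zero (ne_of_gt hx1), Real.log_one]
      have h2 : x / (|x| + 1) * x + |x| / (|x| + 1) = |x| := by
        have : x * x = |x| * |x| := (abs_mul_abs_self x).symm
        field_simp
        nlinarith
      linarith [h2]
  · rintro y ⟨η, ⟨hη1, hη2⟩, rfl⟩
    simp only
    have ht1 : |η| < 1 := abs_lt.mpr ⟨hη1, hη2⟩
    have ht0 : (0:ℝ) ≤ |η| := abs_nonneg η
    have h1 : η * x ≤ |η| * |x| := by
      calc η * x ≤ |η * x| := le_abs_self _
        _ = |η| * |x| := abs_mul η x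
    have hpos : (0:ℝ) < (1 - |η|) * (|x| + 1) := by
      have : (0:ℝ) < 1 - |η| := by linarith
      positivity
    have key : Real.log ((1 - |η|) * (|x| + 1)) ≤ (1 - |η|) * (|x| + 1) - 1 :=
      Real.log_le_sub_one_of_pos hpos
    have hlogmul : Real.log ((1 - |η|) * (|x| + 1))
        = Real.log (1 - |η|) + Real.log (|x| + 1) :=
      Real.log_mul (by linarith) (ne_of_gt hx1)
    rw [hlogmul] at key
    nlinarith [key, h1]
end

section
/- Let f(η) = −log(1−|η|) − |η| for η ∈ (−1,1) and fix x ∈ ℝ. The function η ↦ η·x − f(η) attains its maximum over (−1,1) at η* = x/(|x|+1), and |η*| < 1. -/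
/-- For `f(η) = −log(1−|η|) − |η|` on `(−1,1)` and fixed `x ∈ ℝ`, the map
`η ↦ η·x − f(η)` attains its maximum over `(−1,1)` at `η* = x/(|x|+1)`, and `|η*| < 1`. -/
theorem maximizer_log_barrier (x : ℝ) :
    |x / (|x| + 1)| < 1 ∧
      ∀ η ∈ Set.Ioo (-1 : ℝ) 1,
        η * x - (-Real.log (1 - |η|) - |η|)
          ≤ (x / (|x| + 1)) * x
              - (-Real.log (1 - |x / (|x| + 1)|) - |x / (|x| + 1)|) := by
  have ha : (0:ℝ) ≤ |x| := abs_nonneg x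
  have hp : (0:ℝ) < |x| + 1 := by linarith
  have habs : |x / (|x| + 1)| = |x| / (|x| + 1) := by
    rw [abs_div, abs_of_pos hp]
  have h1 : |x| / (|x| + 1) < 1 := (div_lt_one hp).2 (by linarith)
  refine ⟨by rw [habs]; exact h1, ?_⟩
  intro η hη
  have ht0 : (0:ℝ) ≤ |η| := abs_nonneg η
  have ht1 : |η| < 1 := abs_lt.2 ⟨hη.1, hη.2⟩
  rw [habs]
  have h2 : 1 - |x| / (|x| + 1) = 1 / (|x| + 1) := by field_simp; ring
  rw [h2, Real.log_div one_ne_zero (ne_of_gt hp), Real.log_one]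
  have hy : (0:ℝ) < (1 - |η|) * (|x| + 1) := mul_pos (by linarith) hp
  have hlog : Real.log ((1 - |η|) * (|x| + 1)) ≤ (1 - |η|) * (|x| + 1) - 1 :=
    Real.log_le_sub_one_of_pos hy
  rw [Real.log_mul (by linarith) (ne_of_gt hp)] at hlog
  have hex : η * x ≤ |η| * |x| := (le_abs_self _).trans (le_of_eq (abs_mul η x))
  have hrhs : (x / (|x| + 1)) * x - (-(0 - Real.log (|x| + 1)) - |x| / (|x| + 1))
      = |x| - Real.log (|x| + 1) := by
    have hx2 : x * x = |x| * |x| := (abs_mul_abs_self x).symm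
    field_simp
    nlinarith [hx2]
  rw [hrhs]
  nlinarith [hlog, hex]
end

section
/- Let Ψ(x) = x − log(1+x) for x ≥ 0. For all x ≥ 0 and y ≥ 0, if Ψ(x) ≤ y then x ≤ y + log(1 + y + √(2y)). -/
lemma psi_strictMono {a b : ℝ} (ha : 0 ≤ a) (hab : a < b) :
    a - Real.log (1 + a) < b - Real.log (1 + b) := by
  have h1a : (0:ℝ) < 1 + a := by linarith
  have h1b : (0:ℝ) < 1 + b := by linarith
  have hlog : Real.log (1 + b) - Real.log (1 + a) =
      Real.log ((1 + b) / (1 + a)) := by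
    rw [Real.log_div (by positivity) (by positivity)]
  have hne : (1 + b) / (1 + a) ≠ 1 := by
    intro hh
    rw [div_eq_one_iff_eq (by positivity : (1:ℝ) + a ≠ 0)] at hh; linarith
  have := Real.log_lt_sub_one_of_pos (by positivity : (0:ℝ) < (1 + b) / (1 + a)) hne
  have h2 : (1 + b) / (1 + a) - 1 = (b - a) / (1 + a) := by field_simp; ring
  have h3 : (b - a) / (1 + a) ≤ b - a := by
    rw [div_le_iff₀ h1a]; nlinarith
  rw [h2] at this
  rw [sub_lt_sub_iff] at *
  nlinarith [hlog]

/-- For `Ψ(x) = x − log(1+x)` on `[0,∞)`: if `x, y ≥ 0` and `Ψ(x) ≤ y` then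
`x ≤ y + log(1 + y + √(2y))`. -/
theorem psi_inverse_bound (x y : ℝ) (hx : 0 ≤ x) (hy : 0 ≤ y)
    (h : x - Real.log (1 + x) ≤ y) :
    x ≤ y + Real.log (1 + y + Real.sqrt (2 * y)) := by
  set s := Real.sqrt (2 * y) with hs
  have hs0 : 0 ≤ s := Real.sqrt_nonneg _
  have hs2 : s ^ 2 = 2 * y := Real.sq_sqrt (by linarith)
  set L := Real.log (1 + y + s) with hL
  have harg : (1:ℝ) ≤ 1 + y + s := by linarith
  have hL0 : 0 ≤ L := Real.log_nonneg harg
  -- L ≤ s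
  have hLs : L ≤ s := by
    have := Real.quadratic_le_exp_of_nonneg hs0
    have h1 : 1 + y + s ≤ Real.exp s := by nlinarith
    calc L ≤ Real.log (Real.exp s) := Real.log_le_log (by linarith) h1
      _ = s := Real.log_exp s
  set z := y + L with hz
  have hz0 : 0 ≤ z := by linarith
  have hpsiz : y ≤ z - Real.log (1 + z) := by
    have h1z : 1 + z ≤ 1 + y + s := by simp only [hz]; linarith
    have : Real.log (1 + z) ≤ L := Real.log_le_log (by linarith) h1z
    linarith
  by_contra hc
  push_neg at hc
  have := psi_strictMono hz0 hc
  linarith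
end

section
/- Let Ψ(x) = x − log(1+x) for x ≥ 0. For all x ≥ 0 and y ≥ 0, if Ψ(x) ≤ y then x ≤ 2y + √(2y). -/
/-- For `Ψ(x) = x − log(1+x)` on `[0,∞)`: if `x, y ≥ 0` and `Ψ(x) ≤ y` then
`x ≤ 2y + √(2y)`. -/
theorem psi_inverse_bound_simple (x y : ℝ) (hx : 0 ≤ x) (hy : 0 ≤ y)
    (h : x - Real.log (1 + x) ≤ y) :
    x ≤ 2 * y + Real.sqrt (2 * y) := by
  have hsq : 0 ≤ Real.sqrt (2 * y) := Real.sqrt_nonneg _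
  rcases le_or_gt x y with hxy | hxy
  · linarith
  · set z : ℝ := x - y with hz
    have hz0 : 0 ≤ z := by simp [hz]; linarith
    have h1x : (0:ℝ) < 1 + x := by linarith
    have hexp : Real.exp z ≤ 1 + x := by
      calc Real.exp z ≤ Real.exp (Real.log (1 + x)) := by
            apply Real.exp_le_exp.mpr; linarith
        _ = 1 + x := Real.exp_log h1x
    have hquad := Real.quadratic_le_exp_of_nonneg hz0
    have hz2 : z ^ 2 ≤ 2 * y := by nlinarith
    have hzs : z ≤ Real.sqrt (2 * y) := by
      have := Real.sqrt_le_sqrt hz2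
      rwa [Real.sqrt_sq hz0] at this
    linarith
end

section
/- For all real β with |β| < 1 and all real x with |x| ≤ 1, one has log(1 + βx) ≥ βx + x²·(log(1−|β|) + |β|). -/
open Real Finset

/-- For all `β` with `|β| < 1` and all `x` with `|x| ≤ 1`,
`log(1 + βx) ≥ βx + x²·(log(1−|β|) + |β|)`. -/
theorem log_one_add_mul_ge (β x : ℝ) (hβ : |β| < 1) (hx : |x| ≤ 1) :
    Real.log (1 + β * x) ≥ β * x + x ^ 2 * (Real.log (1 - |β|) + |β|) := by
  set t : ℝ := β * x with ht
  have habs_t : |t| ≤ |β| := by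
    rw [ht, abs_mul]
    calc |β| * |x| ≤ |β| * 1 := by
          exact mul_le_mul_of_nonneg_left hx (abs_nonneg β)
      _ = |β| := mul_one _
  have h1 : |(-t)| < 1 := by rw [abs_neg]; exact lt_of_le_of_lt habs_t hβ
  have h2 : |(|β|)| < 1 := by rwa [abs_abs]
  -- series for -log(1 + t)
  have ha := Real.hasSum_pow_div_log_of_abs_lt_one h1
  have hb := Real.hasSum_pow_div_log_of_abs_lt_one h2
  rw [show (1 : ℝ) - -t = 1 + t by ring] at ha
  -- shift by one
  have ha' : HasSum (fun n : ℕ => (-t) ^ (n + 2) / (n + 2)) (-Real.log (1 + t) - -t) := by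
    have := (hasSum_nat_add_iff' (f := fun n : ℕ => (-t) ^ (n + 1) / (n + 1)) 1).mpr ha
    have e : ((1:ℝ) + 1) = 2 := by norm_num
    simpa [add_assoc, e] using this
  have hb' : HasSum (fun n : ℕ => (|β|) ^ (n + 2) / (n + 2)) (-Real.log (1 - |β|) - |β|) := by
    have := (hasSum_nat_add_iff' (f := fun n : ℕ => (|β|) ^ (n + 1) / (n + 1)) 1).mpr hb
    have e : ((1:ℝ) + 1) = 2 := by norm_num
    simpa [add_assoc, e] using this
  have hb'' : HasSum (fun n : ℕ => x ^ 2 * ((|β|) ^ (n + 2) / (n + 2)))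
      (x ^ 2 * (-Real.log (1 - |β|) - |β|)) := hb'.mul_left _
  have hle : ∀ n : ℕ, (-t) ^ (n + 2) / (n + 2) ≤ x ^ 2 * ((|β|) ^ (n + 2) / (n + 2)) := by
    intro n
    rw [← mul_div_assoc]
    apply div_le_div_of_nonneg_right _ (by positivity)
    calc (-t) ^ (n + 2) ≤ |(-t) ^ (n + 2)| := le_abs_self _
      _ = (|β| * |x|) ^ (n + 2) := by rw [abs_pow, abs_neg, ht, abs_mul]
      _ = |β| ^ (n + 2) * |x| ^ (n + 2) := mul_pow _ _ _
      _ ≤ |β| ^ (n + 2) * |x| ^ 2 := by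
          apply mul_le_mul_of_nonneg_left _ (by positivity)
          exact pow_le_pow_of_le_one (abs_nonneg x) hx (by omega)
      _ = x ^ 2 * |β| ^ (n + 2) := by rw [sq_abs]; ring
  have key := hasSum_le hle ha' hb''
  linarith
end

section
/- Fix b ∈ [0,1). The function x ↦ (log(1 − x·b) + x·b)/x is nonincreasing on (0,1]. -/
/-- For fixed `b ∈ [0,1)`, the function `x ↦ (log(1 − x·b) + x·b)/x` is nonincreasing
on `(0,1]`. -/
theorem antitoneOn_scaled_log_wealth (b : ℝ) (hb : b ∈ Set.Ico (0 : ℝ) 1) :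
    AntitoneOn (fun x : ℝ => (Real.log (1 - x * b) + x * b) / x) (Set.Ioc (0 : ℝ) 1) := by
  obtain ⟨hb0, hb1⟩ := hb
  intro x hx y hy hxy
  obtain ⟨hx0, hx1⟩ := hx
  obtain ⟨hy0, hy1⟩ := hy
  simp only
  rw [div_le_div_iff₀ hy0 hx0]
  have key : x * Real.log (1 - y * b) ≤ y * Real.log (1 - x * b) := by
    set a : ℝ := x / y with ha
    have ha0 : 0 ≤ a := le_of_lt (div_pos hx0 hy0)
    have ha1 : a ≤ 1 := (div_le_one hy0).2 hxy
    have hyb : (0:ℝ) < 1 - y * b := by nlinarith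
    have hconc := strictConcaveOn_log_Ioi.concaveOn.2
      (Set.mem_Ioi.2 hyb) (Set.mem_Ioi.2 one_pos) ha0 (by linarith : (0:ℝ) ≤ 1 - a)
      (by ring)
    have hxy' : a * (1 - y * b) + (1 - a) * 1 = 1 - x * b := by
      field_simp [ha]
      have hay : a * y = x := by rw [ha]; exact div_mul_cancel₀ x hy0.ne'
      linear_combination (-b) * hay
    rw [smul_eq_mul, smul_eq_mul, smul_eq_mul, smul_eq_mul, hxy', Real.log_one,
      mul_zero, add_zero] at hconc
    calc x * Real.log (1 - y * b) = y * (a * Real.log (1 - y * b)) := by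
          field_simp [ha]
          have hay : a * y = x := by rw [ha]; exact div_mul_cancel₀ x hy0.ne'
          rw [mul_right_comm, mul_comm y a, hay]
      _ ≤ y * Real.log (1 - x * b) := by
          exact mul_le_mul_of_nonneg_left hconc (le_of_lt hy0)
  nlinarith [key]
end

section
/- Fix γ > 1 and α ∈ (0,1), and let P_γ be the probability measure on [−1,1] with density β ↦ (log γ)/(2|β|·(log(|β|/γ))²). Let t ≥ 1 and g_1,…,g_t ∈ ℝ with |g_i| ≤ 1 for all i and Σ_{i=1}^t g_i ≠ 0. Set S = Σ_{i=1}^t g_i², V = |Σ_{i=1}^t g_i|, and β̂ = V/(V+S). Then ∫ ∏_{i=1}^t (1+β g_i) dP_γ(β) ≥ exp( α·Ψ(V/S)·S − log( (log γ + log(1/(α β̂)))² / (0.5·log γ·log(1/α)) ) ), where Ψ(x) = x − log(1+x). -/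
open MeasureTheory

open Set Filter
open scoped ENNReal NNReal

lemma mono_endpoints {f f' : ℝ → ℝ} {a b : ℝ} (hab : a ≤ b)
    (hc : ContinuousOn f (Icc a b))
    (hd : ∀ x ∈ Ioo a b, HasDerivAt f (f' x) x)
    (h0 : ∀ x ∈ Ioo a b, 0 ≤ f' x) : f a ≤ f b := by
  have H := monotoneOn_of_deriv_nonneg (convex_Icc a b) hc
    (fun x hx => by
      rw [interior_Icc] at hx
      exact ((hd x hx).differentiableAt).differentiableWithinAt)
    (fun x hx => by
      rw [interior_Icc] at hx
      rw [(hd x hx).deriv]; exact h0 x hx)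
  exact H (left_mem_Icc.2 hab) (right_mem_Icc.2 hab) hab

lemma anti_endpoints {f f' : ℝ → ℝ} {a b : ℝ} (hab : a ≤ b)
    (hc : ContinuousOn f (Icc a b))
    (hd : ∀ x ∈ Ioo a b, HasDerivAt f (f' x) x)
    (h0 : ∀ x ∈ Ioo a b, f' x ≤ 0) : f b ≤ f a := by
  have H := antitoneOn_of_deriv_nonpos (convex_Icc a b) hc
    (fun x hx => by
      rw [interior_Icc] at hx
      exact ((hd x hx).differentiableAt).differentiableWithinAt)
    (fun x hx => by
      rw [interior_Icc] at hx
      rw [(hd x hx).deriv]; exact h0 x hx)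
  exact H (left_mem_Icc.2 hab) (right_mem_Icc.2 hab) hab

lemma logA {b : ℝ} (hb0 : 0 ≤ b) (hb1 : b < 1) :
    2*b + b^2 + 2*Real.log (1-b) ≤ 0 := by
  have key : (fun x : ℝ => 2*x + x^2 + 2*Real.log (1-x)) b
      ≤ (fun x : ℝ => 2*x + x^2 + 2*Real.log (1-x)) 0 := by
    apply anti_endpoints (f' := fun x => 2 + 2*x - 2/(1-x)) hb0
    · apply ContinuousOn.add
      · fun_prop
      · apply ContinuousOn.mul continuousOn_const
        apply ContinuousOn.log (by fun_prop)
        intro x hx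
        have : x < 1 := lt_of_le_of_lt hx.2 hb1
        nlinarith [this]
    · intro x hx
      have hx1 : (1:ℝ) - x ≠ 0 := by
        have : x < 1 := lt_of_lt_of_le hx.2 hb1.le
        nlinarith
      have hld : HasDerivAt (fun y : ℝ => Real.log (1 - y)) (-(1-x)⁻¹) x := by
        have h := (Real.hasDerivAt_log hx1).comp x ((hasDerivAt_id x).const_sub 1)
        simpa [Function.comp_def] using h
      have h1 : HasDerivAt (fun y : ℝ => 2*y + y^2 + 2*Real.log (1-y))
          (2 + 2*x + 2*(-(1-x)⁻¹)) x := by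
        have := (((hasDerivAt_id x).const_mul 2).add (hasDerivAt_pow 2 x)).add
          (hld.const_mul 2)
        refine this.congr_deriv (Eq.symm ?_)
        ring
      convert h1 using 1
      field_simp
      ring
    · intro x hx
      have hx1 : (0:ℝ) < 1 - x := by
        have : x < 1 := lt_of_lt_of_le hx.2 hb1.le
        linarith
      have h2 : 2 + 2*x - 2/(1-x) = (-2*x^2)/(1-x) := by field_simp; ring
      rw [h2]
      apply div_nonpos_of_nonpos_of_nonneg <;> nlinarith
  simpa using key

open scoped ENNReal NNReal
set_option maxHeartbeats 1000000 in
lemma fan {b x : ℝ} (hb0 : 0 ≤ b) (hb1 : b < 1) (hx : |x| ≤ 1) :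
    b*x + x^2*(Real.log (1-b) + b) ≤ Real.log (1 + b*x) := by
  rcases eq_or_lt_of_le hb0 with hb | hb
  · simp [← hb]
  obtain ⟨hxl, hxr⟩ := abs_le.1 hx
  set c : ℝ := Real.log (1-b) + b with hc
  have hc0 : c < 0 := by
    have := Real.log_lt_sub_one_of_pos (x := 1-b) (by linarith) (by intro h; simp at h; linarith [hb])
    simp only [hc]; linarith
  have hcb : b^2 ≤ -(2*c) := by
    have := logA hb0 hb1
    simp only [hc]; linarith
  rcases le_or_gt 0 x with hx0 | hx0
  · -- positive case
    have key : (fun y : ℝ => Real.log (1+b*y) - b*y - c*y^2) 0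
        ≤ (fun y : ℝ => Real.log (1+b*y) - b*y - c*y^2) x := by
      apply mono_endpoints (f := fun y : ℝ => Real.log (1+b*y) - b*y - c*y^2)
        (f' := fun y => b/(1+b*y) - b - 2*c*y) hx0
      · apply ContinuousOn.sub
        apply ContinuousOn.sub
        · apply ContinuousOn.log (by fun_prop)
          intro y hy
          have : 0 ≤ b*y := mul_nonneg hb0 hy.1
          positivity
        · fun_prop
        · fun_prop
      · intro y hy
        have hD : (0:ℝ) < 1 + b*y := by nlinarith [hy.1]
        have h1 : HasDerivAt (fun y : ℝ => 1 + b*y) b y := by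
          simpa using ((hasDerivAt_id y).const_mul b).const_add 1
        have hlog := h1.log hD.ne'
        have h2 : HasDerivAt (fun y : ℝ => b*y) b y := by
          simpa using (hasDerivAt_id y).const_mul b
        have h3 : HasDerivAt (fun y : ℝ => c*y^2) (c*(2*y)) y := by
          simpa using (hasDerivAt_pow 2 y).const_mul c
        have := (hlog.sub h2).sub h3
        refine this.congr_deriv (Eq.symm ?_)
        ring
      · intro y hy
        have hy0 : 0 < y := hy.1
        have hD : (0:ℝ) < 1 + b*y := by nlinarith
        have heq : b/(1+b*y) - b - 2*c*y = (y*(-b^2 - 2*c) + (-(2*c))*b*y^2)/(1+b*y) := by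
          field_simp
          ring
        rw [heq]
        apply div_nonneg _ hD.le
        nlinarith [mul_nonneg hy0.le (by linarith [hcb] : (0:ℝ) ≤ -b^2 - 2*c),
          mul_nonneg (mul_nonneg (by linarith : (0:ℝ) ≤ -(2*c)) hb0) (sq_nonneg y)]
    have key2 : c * x^2 ≤ Real.log (1+b*x) - b*x := by simpa using key
    nlinarith [key2]
  · -- negative case
    set u : ℝ := -x with hu
    have hu0 : 0 < u := by simp [hu]; linarith
    have hu1 : u ≤ 1 := by simp [hu]; linarith
    have goal : 0 ≤ Real.log (1-b*u) + b*u - c*u^2 := by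
      set ψ : ℝ → ℝ := fun v => Real.log (1-b*v) + b*v - c*v^2 with hψ
      set ψ' : ℝ → ℝ := fun v => -b/(1-b*v) + b - 2*c*v with hψ'
      have hcont : ContinuousOn ψ (Icc 0 1) := by
        apply ContinuousOn.sub
        apply ContinuousOn.add
        · apply ContinuousOn.log (by fun_prop)
          intro y hy
          have : b*y ≤ b := by nlinarith [hy.1, hy.2]
          nlinarith
        · fun_prop
        · fun_prop
      have hderiv : ∀ v ∈ Ioo (0:ℝ) 1, HasDerivAt ψ (ψ' v) v := by
        intro v hv
        have hD : (0:ℝ) < 1 - b*v := by nlinarith [hv.1, hv.2]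
        have h1 : HasDerivAt (fun v : ℝ => 1 - b*v) (-b) v := by
          simpa using ((hasDerivAt_id v).const_mul b).const_sub 1
        have hlog := h1.log hD.ne'
        have h2 : HasDerivAt (fun v : ℝ => b*v) b v := by
          simpa using (hasDerivAt_id v).const_mul b
        have h3 : HasDerivAt (fun v : ℝ => c*v^2) (c*(2*v)) v := by
          simpa using (hasDerivAt_pow 2 v).const_mul c
        have := (hlog.add h2).sub h3
        refine this.congr_deriv (Eq.symm ?_)
        simp only [hψ']
        ring
      have hψ0 : ψ 0 = 0 := by simp [hψ]
      have hψ1 : ψ 1 = 0 := by simp [hψ, hc]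
      set u0 : ℝ := (b^2 + 2*c)/(2*c*b) with hu0def
      have hkey : ∀ v : ℝ, 0 ≤ v → v ≤ 1 →
          ψ' v = (v*(-b^2 - 2*c + 2*c*b*v))/(1-b*v) := by
        intro v hv0 hv1
        have hD : (0:ℝ) < 1 - b*v := by nlinarith
        simp only [hψ']
        field_simp
        ring
      rcases le_or_gt u u0 with hcase | hcase
      · -- ψ monotone on [0,u]
        have : ψ 0 ≤ ψ u := by
          apply mono_endpoints hu0.le
          · exact hcont.mono (Icc_subset_Icc le_rfl hu1)
          · exact fun v hv => hderiv v ⟨hv.1, lt_of_lt_of_le hv.2 hu1⟩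
          · intro v hv
            rw [hkey v hv.1.le (le_trans hv.2.le hu1)]
            apply div_nonneg _ (by nlinarith [hv.1, hv.2] : (0:ℝ) ≤ 1 - b*v)
            have hvu0 : v ≤ u0 := le_trans hv.2.le hcase
            have h2c : 2*c*b*v ≥ 2*c*b*u0 := by
              apply mul_le_mul_of_nonpos_left hvu0
              nlinarith
            have hne : 2*c*b ≠ 0 := ne_of_lt (by nlinarith)
            have hmul : 2*c*b*u0 = b^2 + 2*c := by
              rw [hu0def]; field_simp [hc0.ne]
            nlinarith [hv.1]
        rw [hψ0] at this; exact this
      · -- ψ antitone on [u,1]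
        have : ψ 1 ≤ ψ u := by
          apply anti_endpoints hu1
          · exact hcont.mono (Icc_subset_Icc hu0.le le_rfl)
          · exact fun v hv => hderiv v ⟨lt_trans hu0 hv.1, hv.2⟩
          · intro v hv
            rw [hkey v (le_trans hu0.le hv.1.le) hv.2.le]
            apply div_nonpos_of_nonpos_of_nonneg _
              (by nlinarith [hv.1, hv.2, hu0] : (0:ℝ) ≤ 1 - b*v)
            have hvu0 : u0 < v := lt_trans hcase hv.1
            have h2c : 2*c*b*v ≤ 2*c*b*u0 := by
              apply mul_le_mul_of_nonpos_left hvu0.le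
              nlinarith
            have hne : 2*c*b ≠ 0 := ne_of_lt (by nlinarith)
            have hmul : 2*c*b*u0 = b^2 + 2*c := by
              rw [hu0def]; field_simp [hc0.ne]
            nlinarith [hu0, hv.1]
        rw [hψ1] at this; exact this
    have hxu : x = -u := by simp [hu]
    rw [hxu]
    have : 1 + b*(-u) = 1 - b*u := by ring
    rw [this]
    nlinarith [goal]

noncomputable def wden (γ β : ℝ) : ℝ := Real.log γ / (2 * |β| * (Real.log (|β| / γ))^2)

lemma wden_nonneg {γ : ℝ} (hγ : 1 < γ) (β : ℝ) : 0 ≤ wden γ β :=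
  div_nonneg (Real.log_nonneg hγ.le) (by positivity)

lemma wden_neg (γ β : ℝ) : wden γ (-β) = wden γ β := by simp [wden]

noncomputable def wanti (γ β : ℝ) : ℝ := Real.log γ / 2 * (Real.log γ - Real.log β)⁻¹

lemma wanti_hasDeriv {γ x : ℝ} (hγ : 1 < γ) (hx0 : 0 < x) (hx1 : x < 1) :
    HasDerivAt (wanti γ) (wden γ x) x := by
  have hlogx : Real.log x < 0 := Real.log_neg hx0 hx1
  have hlogγ : 0 < Real.log γ := Real.log_pos hγ
  have hD : Real.log γ - Real.log x ≠ 0 := ne_of_gt (by linarith)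
  have h1 : HasDerivAt (fun y : ℝ => Real.log γ - Real.log y) (-x⁻¹) x := by
    simpa using (Real.hasDerivAt_log hx0.ne').const_sub (Real.log γ)
  have h2 := (h1.inv hD).const_mul (Real.log γ / 2)
  refine h2.congr_deriv (Eq.symm ?_)
  rw [wden, abs_of_pos hx0, Real.log_div hx0.ne' (by positivity)]
  have hsq : (Real.log x - Real.log γ)^2 = (Real.log γ - Real.log x)^2 := by ring
  rw [hsq]
  have key : ∀ (L A y : ℝ), y ≠ 0 → A ≠ 0 → L / (2*y*A^2) = L/2 * (- -y⁻¹/A^2) := by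
    intro L A y hy hA; field_simp
  exact key _ _ _ hx0.ne' hD

noncomputable def wG (γ : ℝ) : ℝ → ℝ := fun y => if y ≤ 0 then 0 else wanti γ y

lemma wG_contOn {γ : ℝ} (hγ : 1 < γ) : ContinuousOn (wG γ) (Icc 0 1) := by
  have hlogγ : 0 < Real.log γ := Real.log_pos hγ
  intro x hx
  rcases eq_or_lt_of_le hx.1 with h0 | h0
  · -- x = 0
    rw [← h0, ← Ioc_insert_left (zero_le_one (α := ℝ)), continuousWithinAt_insert_self]
    have hG0 : wG γ 0 = 0 := by simp [wG]
    unfold ContinuousWithinAt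
    rw [hG0]
    have hev : wG γ =ᶠ[nhdsWithin 0 (Ioc (0:ℝ) 1)] wanti γ := by
      filter_upwards [self_mem_nhdsWithin] with y hy
      simp [wG, not_le.2 hy.1]
    rw [tendsto_congr' hev]
    have h1 : Tendsto Real.log (nhdsWithin (0:ℝ) (Ioc (0:ℝ) 1)) atBot :=
      Real.tendsto_log_nhdsGT_zero.mono_left
        (nhdsWithin_mono _ Ioc_subset_Ioi_self)
    have h2 : Tendsto (fun y : ℝ => Real.log γ - Real.log y)
        (nhdsWithin (0:ℝ) (Ioc (0:ℝ) 1)) atTop := by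
      apply tendsto_atTop_mono (fun y => by linarith : ∀ y, -Real.log y ≤ Real.log γ - Real.log y)
      exact tendsto_neg_atBot_iff.1 (by simpa using h1)
    have h3 := (h2.inv_tendsto_atTop).const_mul (Real.log γ / 2)
    unfold wanti; simpa [mul_zero] using h3
  · -- x > 0
    have : ContinuousAt (wG γ) x := by
      have hev : ∀ᶠ y in nhds x, wG γ y = wanti γ y := by
        filter_upwards [eventually_gt_nhds h0] with y hy
        simp [wG, not_le.2 hy]
      apply ContinuousAt.congr _ (by filter_upwards [hev] with y hy using hy.symm)
      have hlx : Real.log x ≤ 0 := Real.log_nonpos h0.le hx.2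
      apply ContinuousAt.mul continuousAt_const
      apply ContinuousAt.inv₀
      · exact continuousAt_const.sub (Real.continuousAt_log h0.ne')
      · exact ne_of_gt (by linarith)
    exact this.continuousWithinAt

lemma wden_hasDeriv_G {γ : ℝ} (hγ : 1 < γ) :
    ∀ x ∈ Ioo (0:ℝ) 1, HasDerivAt (wG γ) (wden γ x) x := by
  intro x hx
  have hev : wG γ =ᶠ[nhds x] wanti γ := by
    filter_upwards [eventually_gt_nhds hx.1] with y hy
    simp [wG, not_le.2 hy]
  exact (wanti_hasDeriv hγ hx.1 hx.2).congr_of_eventuallyEq hev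

lemma wden_integrableOn_pos {γ : ℝ} (hγ : 1 < γ) :
    IntegrableOn (wden γ) (Ioc (0:ℝ) 1) volume :=
  intervalIntegral.integrableOn_deriv_of_nonneg (wG_contOn hγ) (wden_hasDeriv_G hγ)
    (fun x _ => wden_nonneg hγ x)

lemma wden_integrableOn_neg {γ : ℝ} (hγ : 1 < γ) :
    IntegrableOn (wden γ) (Ioc (-1:ℝ) 0) volume := by
  apply intervalIntegral.integrableOn_deriv_of_nonneg (g := fun y => -(wG γ (-y)))
  · apply ContinuousOn.neg
    apply (wG_contOn hγ).comp continuous_neg.continuousOn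
    intro y hy
    have h1 := hy.1; have h2 := hy.2
    exact ⟨by simp only; linarith, by simp only; linarith⟩
  · intro x hx
    have hG := wden_hasDeriv_G hγ (-x) ⟨by linarith [hx.2], by linarith [hx.1]⟩
    have := (hG.comp x (hasDerivAt_neg x)).neg
    simpa [wden_neg, Function.comp_def, Pi.neg_def] using this
  · exact fun x _ => wden_nonneg hγ x

lemma wden_integrableOn {γ : ℝ} (hγ : 1 < γ) :
    IntegrableOn (wden γ) (Icc (-1:ℝ) 1) volume := by
  rw [integrableOn_Icc_iff_integrableOn_Ioc]
  have : Ioc (-1:ℝ) 1 = Ioc (-1:ℝ) 0 ∪ Ioc 0 1 :=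
    (Ioc_union_Ioc_eq_Ioc (by norm_num) (by norm_num)).symm
  rw [this]
  exact (wden_integrableOn_neg hγ).union (wden_integrableOn_pos hγ)

lemma wden_continuousAt {γ x : ℝ} (hγ : 1 < γ) (hx0 : x ≠ 0) (hx1 : |x| < 1) :
    ContinuousAt (wden γ) x := by
  have habs : 0 < |x| := abs_pos.2 hx0
  have hlog : Real.log (|x|/γ) < 0 :=
    Real.log_neg (by positivity) (by rw [div_lt_one (by linarith)]; linarith)
  apply ContinuousAt.div continuousAt_const
  · apply ContinuousAt.mul
    · exact (continuous_const.mul continuous_abs).continuousAt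
    · apply ContinuousAt.pow
      apply ContinuousAt.comp (Real.continuousAt_log (by positivity))
      exact (continuous_abs.div_const γ).continuousAt
  · have hsq : 0 < (Real.log (|x|/γ))^2 :=
      lt_of_le_of_ne (sq_nonneg _) (Ne.symm (pow_ne_zero 2 (ne_of_lt hlog)))
    exact ne_of_gt (mul_pos (by positivity) hsq)

lemma wden_mass_pos {γ a b : ℝ} (hγ : 1 < γ) (h0 : 0 < a) (hab : a ≤ b) (hb1 : b < 1) :
    ∫ x in Icc a b, wden γ x = wanti γ b - wanti γ a := by
  rw [integral_Icc_eq_integral_Ioc, ← intervalIntegral.integral_of_le hab]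
  apply intervalIntegral.integral_eq_sub_of_hasDerivAt
  · intro x hx
    rw [uIcc_of_le hab] at hx
    exact wanti_hasDeriv hγ (lt_of_lt_of_le h0 hx.1) (lt_of_le_of_lt hx.2 hb1)
  · apply ContinuousOn.intervalIntegrable
    intro x hx
    rw [uIcc_of_le hab] at hx
    have hx0 : 0 < x := lt_of_lt_of_le h0 hx.1
    have hx1 : x < 1 := lt_of_le_of_lt hx.2 hb1
    exact (wden_continuousAt hγ hx0.ne' (by rw [abs_of_pos hx0]; exact hx1)).continuousWithinAt

lemma wden_mass_neg {γ a b : ℝ} (hγ : 1 < γ) (h0 : 0 < a) (hab : a ≤ b) (hb1 : b < 1) :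
    ∫ x in Icc (-b) (-a), wden γ x = wanti γ b - wanti γ a := by
  have h1 : ∫ x in Icc (-b) (-a), wden γ x = ∫ x in (-b)..(-a), wden γ x := by
    rw [integral_Icc_eq_integral_Ioc, intervalIntegral.integral_of_le (by linarith)]
  rw [h1, ← intervalIntegral.integral_comp_neg (fun x => wden γ x)]
  have h2 : (fun x => wden γ (-x)) = fun x => wden γ x := funext fun x => wden_neg γ x
  calc ∫ x in a..b, wden γ (-x) = ∫ x in a..b, wden γ x := by rw [h2]
    _ = wanti γ b - wanti γ a := by
        rw [intervalIntegral.integral_of_le hab, ← integral_Icc_eq_integral_Ioc]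
        exact wden_mass_pos hγ h0 hab hb1



set_option maxHeartbeats 2000000 in
/-- Deterministic wealth lower bound for the mixture over the prior with density
`β ↦ (log γ)/(2|β|(log(|β|/γ))²)` on `[−1,1]`: with `S = Σ gᵢ²`, `V = |Σ gᵢ|`,
`β̂ = V/(V+S)` and `Ψ(x) = x − log(1+x)`,
`∫ ∏_{i<t}(1+β gᵢ) dP_γ(β)
  ≥ exp(α·Ψ(V/S)·S − log((log γ + log(1/(αβ̂)))²/(0.5·log γ·log(1/α))))`. -/
theorem mixture_wealth_lower_bound (γ α : ℝ) (hγ : 1 < γ)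
    (hα : α ∈ Set.Ioo (0 : ℝ) 1)
    (t : ℕ) (ht : 1 ≤ t) (g : ℕ → ℝ) (hg : ∀ i < t, |g i| ≤ 1)
    (hsum : (∑ i ∈ Finset.range t, g i) ≠ 0)
    (S V : ℝ) (hS : S = ∑ i ∈ Finset.range t, (g i) ^ 2)
    (hV : V = |∑ i ∈ Finset.range t, g i|) :
    ∫ β, ∏ i ∈ Finset.range t, (1 + β * g i)
        ∂((volume.restrict (Set.Icc (-1 : ℝ) 1)).withDensity
            (fun β => ENNReal.ofReal (Real.log γ / (2 * |β| * (Real.log (|β| / γ)) ^ 2))))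
      ≥ Real.exp (α * (V / S - Real.log (1 + V / S)) * S
          - Real.log ((Real.log γ + Real.log (1 / (α * (V / (V + S))))) ^ 2
              / (0.5 * Real.log γ * Real.log (1 / α)))) := by
  obtain ⟨hα0, hα1⟩ := hα
  set T : ℝ := ∑ i ∈ Finset.range t, g i with hT
  have hSpos : 0 < S := by
    obtain ⟨i, hi, hgne⟩ : ∃ i ∈ Finset.range t, g i ≠ 0 := by
      by_contra h
      push_neg at h
      exact hsum (Finset.sum_eq_zero h)
    rw [hS]
    exact Finset.sum_pos' (fun j _ => sq_nonneg _) ⟨i, hi, by positivity⟩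
  have hVpos : 0 < V := by rw [hV]; exact abs_pos.2 hsum
  have hVS : 0 < V + S := by linarith
  set bh : ℝ := V / (V + S) with hbh
  have hbh0 : 0 < bh := by rw [hbh]; positivity
  have hbh1 : bh < 1 := by rw [hbh, div_lt_one hVS]; linarith
  set a : ℝ := α * bh with ha
  have ha0 : 0 < a := by rw [ha]; positivity
  have hab : a ≤ bh := by rw [ha]; nlinarith
  have ha1 : a < 1 := lt_of_le_of_lt hab hbh1
  have hlogγ : 0 < Real.log γ := Real.log_pos hγ
  set ΨS : ℝ := V - S * Real.log (1 + V/S) with hΨS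
  have hΨSnonneg : 0 ≤ ΨS := by
    have h1 : Real.log (1 + V/S) ≤ 1 + V/S - 1 :=
      Real.log_le_sub_one_of_pos (by positivity)
    have h3 : S * (V/S) = V := by field_simp
    rw [hΨS]
    nlinarith [mul_le_mul_of_nonneg_left h1 hSpos.le]
  set C : ℝ := Real.exp (α * ΨS) with hC
  set P : ℝ → ℝ := fun β => ∏ i ∈ Finset.range t, (1 + β * g i) with hP
  -- pointwise product lower bound
  have hkey : ∀ β : ℝ, a ≤ |β| → |β| ≤ bh → 0 ≤ β * T → C ≤ P β := by
    intro β haβ hβb hβT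
    set b : ℝ := |β| with hb
    have hb0 : 0 < b := lt_of_lt_of_le ha0 haβ
    have hb1 : b < 1 := lt_of_le_of_lt hβb hbh1
    have hb2 : b^2 = β^2 := by rw [hb]; exact sq_abs β
    set c : ℝ := Real.log (1 - b) + b with hcdef
    have hfac : ∀ i ∈ Finset.range t, Real.exp (β * g i + g i ^ 2 * c) ≤ 1 + β * g i := by
      intro i hi
      have hgi : |g i| ≤ 1 := hg i (Finset.mem_range.1 hi)
      have hx : |β * g i / b| ≤ 1 := by
        rw [abs_div, abs_mul, ← hb, abs_of_pos hb0, mul_comm, mul_div_assoc,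
          div_self hb0.ne', mul_one]
        exact hgi
      have hfan := fan hb0.le hb1 hx
      have e1 : b * (β * g i / b) = β * g i := by field_simp
      have e2 : (β * g i / b)^2 = g i ^ 2 := by
        rw [div_pow, mul_pow, ← hb2]
        field_simp
      rw [e1, e2] at hfan
      have habs : |β * g i| ≤ b := by
        rw [abs_mul, ← hb]
        nlinarith [abs_nonneg β, abs_nonneg (g i)]
      have hpos : 0 < 1 + β * g i := by
        have := (abs_le.1 habs).1
        linarith
      calc Real.exp (β * g i + g i ^ 2 * c) ≤ Real.exp (Real.log (1 + β * g i)) :=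
            Real.exp_le_exp.2 hfan
        _ = 1 + β * g i := Real.exp_log hpos
    have hprod : Real.exp (∑ i ∈ Finset.range t, (β * g i + g i ^ 2 * c)) ≤ P β := by
      rw [Real.exp_sum, hP]
      exact Finset.prod_le_prod (fun i _ => (Real.exp_pos _).le) hfac
    have hsum_eq : ∑ i ∈ Finset.range t, (β * g i + g i ^ 2 * c) = b * V + S * c := by
      rw [Finset.sum_add_distrib, ← Finset.mul_sum, ← Finset.sum_mul, ← hS, ← hT]
      have hβTeq : β * T = b * V := by
        rw [← abs_of_nonneg hβT, abs_mul, ← hb, ← hV]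
      rw [hβTeq, mul_comm S c, mul_comm c S]
    have hM : α * ΨS ≤ b * V + S * c := by
      have hconc : (b/bh) * Real.log (1 - bh) ≤ Real.log (1 - b) := by
        have hu0 : (0:ℝ) ≤ b/bh := by positivity
        have hv0 : (0:ℝ) ≤ 1 - b/bh := by
          have : b/bh ≤ 1 := (div_le_one hbh0).2 hβb
          linarith
        have hcc := strictConcaveOn_log_Ioi.concaveOn.2
          (mem_Ioi.2 (by linarith : (0:ℝ) < 1 - bh)) (mem_Ioi.2 one_pos)
          hu0 hv0 (by ring)
        simp only [smul_eq_mul, Real.log_one, mul_zero, add_zero, mul_one] at hcc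
        have harg : (b/bh) * (1 - bh) + (1 - b/bh) = 1 - b := by
          field_simp
          ring
        rwa [harg] at hcc
      have hbhV : bh * (V + S) = V := by rw [hbh]; field_simp
      have hlog1bh : Real.log (1 - bh) = -Real.log (1 + V/S) := by
        have h1 : 1 - bh = S/(V+S) := by rw [hbh]; field_simp; ring
        have h2 : 1 + V/S = (V+S)/S := by field_simp; ring
        rw [h1, h2, Real.log_div hSpos.ne' hVS.ne', Real.log_div hVS.ne' hSpos.ne']
        ring
      have hΨdecomp : ΨS = bh * (V + S) + S * Real.log (1 - bh) := by
        rw [hΨS, hbhV, hlog1bh]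
        ring
      have hMb : (b/bh) * ΨS ≤ b * V + S * c := by
        have h4 : S * ((b/bh) * Real.log (1 - bh)) ≤ S * Real.log (1 - b) :=
          mul_le_mul_of_nonneg_left hconc hSpos.le
        have h5 : b * (V + S) = (b/bh) * (bh * (V + S)) := by field_simp
        have h6 : b * V + S * c = b * (V + S) + S * Real.log (1 - b) := by
          rw [hcdef]; ring
        rw [h6, hΨdecomp, h5]
        nlinarith [h4]
      have hαb : α ≤ b/bh := by
        rw [le_div_iff₀ hbh0]
        calc α * bh = a := ha.symm
          _ ≤ b := haβ
      calc α * ΨS ≤ (b/bh) * ΨS := mul_le_mul_of_nonneg_right hαb hΨSnonneg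
        _ ≤ b * V + S * c := hMb
    calc C = Real.exp (α * ΨS) := hC
      _ ≤ Real.exp (b * V + S * c) := Real.exp_le_exp.2 hM
      _ = Real.exp (∑ i ∈ Finset.range t, (β * g i + g i ^ 2 * c)) := by rw [hsum_eq]
      _ ≤ P β := hprod
  -- bounds on P over [-1,1]
  have hxg : ∀ x ∈ Icc (-1:ℝ) 1, ∀ i ∈ Finset.range t, |x * g i| ≤ 1 := by
    intro x hx i hi
    have h1 : |x| ≤ 1 := abs_le.2 ⟨hx.1, hx.2⟩
    have h2 : |g i| ≤ 1 := hg i (Finset.mem_range.1 hi)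
    rw [abs_mul]
    nlinarith [abs_nonneg x, abs_nonneg (g i)]
  have hPnonneg : ∀ x ∈ Icc (-1:ℝ) 1, 0 ≤ P x := by
    intro x hx
    apply Finset.prod_nonneg
    intro i hi
    linarith [(abs_le.1 (hxg x hx i hi)).1]
  have hPbound : ∀ x ∈ Icc (-1:ℝ) 1, |P x| ≤ (2:ℝ)^t := by
    intro x hx
    rw [hP]
    calc |∏ i ∈ Finset.range t, (1 + x * g i)|
        = ∏ i ∈ Finset.range t, |1 + x * g i| := Finset.abs_prod _ _
      _ ≤ ∏ i ∈ Finset.range t, 2 := by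
          apply Finset.prod_le_prod (fun i _ => abs_nonneg _)
          intro i hi
          calc |1 + x * g i| ≤ |(1:ℝ)| + |x * g i| := abs_add_le _ _
            _ ≤ 2 := by rw [abs_one]; linarith [hxg x hx i hi]
      _ = (2:ℝ)^t := by rw [Finset.prod_const, Finset.card_range]
  have hPcont : Continuous P := by
    rw [hP]
    apply continuous_finset_prod
    intro i _
    fun_prop
  -- integrability
  have hInt : IntegrableOn (fun x => wden γ x * P x) (Icc (-1:ℝ) 1) volume := by
    have h1 : IntegrableOn (fun x => P x * wden γ x) (Icc (-1:ℝ) 1) volume := by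
      apply Integrable.bdd_mul (c := (2:ℝ)^t) (wden_integrableOn hγ)
        hPcont.aestronglyMeasurable
      apply ae_restrict_of_forall_mem measurableSet_Icc
      intro x hx
      simpa [Real.norm_eq_abs] using hPbound x hx
    have h2 : (fun x => P x * wden γ x) = fun x => wden γ x * P x :=
      funext fun x => mul_comm _ _
    rwa [h2] at h1
  have hae : 0 ≤ᵐ[volume.restrict (Icc (-1:ℝ) 1)] fun x => wden γ x * P x := by
    apply ae_restrict_of_forall_mem measurableSet_Icc
    intro x hx
    exact mul_nonneg (wden_nonneg hγ x) (hPnonneg x hx)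
  -- choose the interval J according to the sign of T
  obtain ⟨J, hJmeas, hJsub, hJlow, hJmass⟩ :
      ∃ J : Set ℝ, MeasurableSet J ∧ J ⊆ Icc (-1:ℝ) 1 ∧ (∀ β ∈ J, C ≤ P β) ∧
        (∫ x in J, wden γ x) = wanti γ bh - wanti γ a := by
    rcases hsum.lt_or_gt with hTneg | hTpos
    · refine ⟨Icc (-bh) (-a), measurableSet_Icc, ?_, ?_, wden_mass_neg hγ ha0 hab hbh1⟩
      · intro x hx
        exact ⟨by linarith [hx.1, hbh1.le], by linarith [hx.2, ha0]⟩
      · intro β hβ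
        have hβneg : β < 0 := lt_of_le_of_lt hβ.2 (by linarith)
        apply hkey
        · rw [abs_of_neg hβneg]; linarith [hβ.2]
        · rw [abs_of_neg hβneg]; linarith [hβ.1]
        · exact (mul_pos_of_neg_of_neg hβneg hTneg).le
    · refine ⟨Icc a bh, measurableSet_Icc, ?_, ?_, wden_mass_pos hγ ha0 hab hbh1⟩
      · intro x hx
        exact ⟨by linarith [hx.1, ha0], by linarith [hx.2, hbh1.le]⟩
      · intro β hβ
        have hβpos : 0 < β := lt_of_lt_of_le ha0 hβ.1
        apply hkey
        · rw [abs_of_pos hβpos]; exact hβ.1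
        · rw [abs_of_pos hβpos]; exact hβ.2
        · exact mul_nonneg hβpos.le hTpos.le
  -- rewrite the withDensity integral as a weighted Lebesgue integral
  rw [ge_iff_le]
  have hwmeas : Measurable fun β : ℝ => (wden γ β).toNNReal := by
    apply Measurable.real_toNNReal
    apply Measurable.div measurable_const
    apply Measurable.mul
    · exact measurable_const.mul measurable_abs
    · exact (Real.measurable_log.comp (measurable_abs.div_const γ)).pow_const 2
  have hof : (fun β : ℝ => ENNReal.ofReal (Real.log γ / (2 * |β| * (Real.log (|β| / γ)) ^ 2)))
      = fun β => ((wden γ β).toNNReal : ℝ≥0∞) := rfl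
  rw [hof, integral_withDensity_eq_integral_smul hwmeas]
  have hsmul : (fun β : ℝ => (wden γ β).toNNReal • P β) = fun β => wden γ β * P β := by
    funext β
    rw [NNReal.smul_def, Real.coe_toNNReal _ (wden_nonneg hγ β), smul_eq_mul]
  rw [hsmul]
  -- the final computation
  set Q : ℝ := (Real.log γ + Real.log (1 / a)) ^ 2 / (0.5 * Real.log γ * Real.log (1 / α))
    with hQ
  have hlogα : Real.log α < 0 := Real.log_neg hα0 hα1
  have hlogoneα : Real.log (1/α) = -Real.log α := by rw [one_div, Real.log_inv]
  have hloga : Real.log (1/a) = -Real.log a := by rw [one_div, Real.log_inv]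
  have hlogaeq : Real.log a = Real.log α + Real.log bh := by
    rw [ha]; exact Real.log_mul hα0.ne' hbh0.ne'
  have hDb : 0 < Real.log γ - Real.log bh := by
    have : Real.log bh < 0 := Real.log_neg hbh0 hbh1
    linarith
  have hLa0 : 0 < Real.log γ - Real.log a := by
    have : Real.log a < 0 := Real.log_neg ha0 ha1
    linarith
  have hDbLa : Real.log γ - Real.log bh ≤ Real.log γ - Real.log a := by
    have := Real.log_le_log ha0 hab
    linarith
  have hQpos : 0 < Q := by
    rw [hQ, hloga]
    have h1 : 0 < Real.log γ + -Real.log a := by linarith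
    have h2 : 0 < 0.5 * Real.log γ * Real.log (1/α) := by
      rw [hlogoneα]; nlinarith
    positivity
  have hΨeq : α * (V/S - Real.log (1 + V/S)) * S = α * ΨS := by
    rw [hΨS]
    field_simp
  rw [hΨeq]
  have hexp : Real.exp (α * ΨS - Real.log Q) = C / Q := by
    rw [Real.exp_sub, Real.exp_log hQpos, hC]
  rw [hexp]
  have hCpos : 0 < C := Real.exp_pos _
  -- 1/Q is at most the mass of J
  have hmain : 1/Q ≤ wanti γ bh - wanti γ a := by
    have hmassval : wanti γ bh - wanti γ a
        = Real.log γ/2 * ((Real.log γ - Real.log bh)⁻¹ - (Real.log γ - Real.log a)⁻¹) := by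
      simp only [wanti]
      ring
    rw [hmassval, hQ, one_div_div]
    have hLa : Real.log γ + Real.log (1/a) = Real.log γ - Real.log a := by
      rw [hloga]; ring
    rw [hLa]
    have hdiff : (Real.log γ - Real.log bh)⁻¹ - (Real.log γ - Real.log a)⁻¹
        = Real.log (1/α) / ((Real.log γ - Real.log bh) * (Real.log γ - Real.log a)) := by
      rw [inv_sub_inv hDb.ne' hLa0.ne', hlogaeq, hlogoneα]
      congr 1
      ring
    rw [hdiff]
    have hrw : Real.log γ/2 * (Real.log (1/α) / ((Real.log γ - Real.log bh) * (Real.log γ - Real.log a)))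
        = (0.5 * Real.log γ * Real.log (1/α)) / ((Real.log γ - Real.log bh) * (Real.log γ - Real.log a)) := by
      rw [show (0.5:ℝ) = 1/2 by norm_num]
      ring
    rw [hrw]
    have hN : 0 ≤ 0.5 * Real.log γ * Real.log (1/α) := by
      rw [hlogoneα]; nlinarith
    have hden : 0 < (Real.log γ - Real.log bh) * (Real.log γ - Real.log a) :=
      mul_pos hDb hLa0
    apply div_le_div_of_nonneg_left hN hden
    nlinarith
  calc C / Q = C * (1/Q) := by ring
    _ ≤ C * (wanti γ bh - wanti γ a) := mul_le_mul_of_nonneg_left hmain hCpos.le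
    _ = (∫ x in J, wden γ x) * C := by rw [hJmass, mul_comm]
    _ = ∫ x in J, wden γ x * C := (integral_mul_const C _).symm
    _ ≤ ∫ x in J, wden γ x * P x := by
        apply setIntegral_mono_on
          (((wden_integrableOn hγ).mono_set hJsub).mul_const C)
          (hInt.mono_set hJsub) hJmeas
        intro x hx
        exact mul_le_mul_of_nonneg_left (hJlow x hx) (wden_nonneg hγ x)
    _ ≤ ∫ x in Icc (-1:ℝ) 1, wden γ x * P x :=
        setIntegral_mono_set hInt hae hJsub.eventuallyLE
end

section
/- Fix γ > 1, α ∈ (0,1), and δ ∈ (0,1). Let (g_t)_{t≥1} be a martingale difference sequence with |g_t| ≤ 1 almost surely. Then with probability at least 1 − δ, simultaneously for all t ≥ 1 with Σ_{i=1}^t g_i ≠ 0: α·Ψ(|Σ_{i=1}^t g_i| / S_t)·S_t ≤ log(1/δ) + log( (log γ + log(1/α) + log(1 + S_t/|Σ_{i=1}^t g_i|))² / (0.5·log γ·log(1/α)) ), where S_t = Σ_{i=1}^t g_i² and Ψ(x) = x − log(1+x). -/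
open MeasureTheory

open Real
open scoped NNReal ENNReal MeasureTheory ProbabilityTheory

-- P(z) = log(1+z) - z + z^2/2 is monotone on Ioi (-1)
lemma P_hasDeriv {z : ℝ} (hz : -1 < z) :
    HasDerivAt (fun z : ℝ => Real.log (1+z) - z + z^2/2) (1/(1+z) - 1 + z) z := by
  have h1 : HasDerivAt (fun z : ℝ => 1 + z) 1 z := (hasDerivAt_id z).const_add 1
  have h2 : HasDerivAt (fun z : ℝ => Real.log (1+z)) (1/(1+z)) z := by
    have := (Real.hasDerivAt_log (by linarith : (1:ℝ)+z ≠ 0)).comp z h1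
    simpa [one_div, Function.comp_def] using this
  have h3 : HasDerivAt (fun z : ℝ => z^2/2) z z := by
    have := (hasDerivAt_pow 2 z).div_const 2
    simpa using this
  exact (h2.sub (hasDerivAt_id z)).add h3

lemma P_mono : MonotoneOn (fun z : ℝ => Real.log (1+z) - z + z^2/2) (Set.Ioi (-1:ℝ)) := by
  have hD : Convex ℝ (Set.Ioi (-1:ℝ)) := convex_Ioi _
  refine monotoneOn_of_deriv_nonneg hD ?_ ?_ ?_
  · intro z hz
    exact ((P_hasDeriv hz).continuousAt).continuousWithinAt
  · intro z hz
    rw [interior_Ioi] at hz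
    exact (P_hasDeriv hz).differentiableAt.differentiableWithinAt
  · intro z hz
    rw [interior_Ioi] at hz
    rw [(P_hasDeriv hz).deriv]
    have h1 : (0:ℝ) < 1 + z := by linarith [Set.mem_Ioi.mp hz]
    have : 1/(1+z) - 1 + z = z^2/(1+z) := by field_simp; ring
    rw [this]
    positivity

lemma P_nonpos {z : ℝ} (h1 : -1 < z) (h2 : z ≤ 0) : Real.log (1+z) - z + z^2/2 ≤ 0 := by
  have := P_mono (Set.mem_Ioi.mpr h1) (Set.mem_Ioi.mpr (by norm_num : (-1:ℝ) < 0)) h2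
  simpa using this

lemma P_nonneg {z : ℝ} (h2 : 0 ≤ z) : 0 ≤ Real.log (1+z) - z + z^2/2 := by
  have := P_mono (Set.mem_Ioi.mpr (by norm_num : (-1:ℝ) < 0)) (Set.mem_Ioi.mpr (by linarith)) h2
  simpa using this

-- N(z) = 2z - z^2/(1+z) - 2 log(1+z), N' = z^2/(1+z)^2
lemma N_hasDeriv {z : ℝ} (hz : -1 < z) :
    HasDerivAt (fun z : ℝ => 2*z - z^2/(1+z) - 2*Real.log (1+z)) (z^2/(1+z)^2) z := by
  have hne : (1:ℝ) + z ≠ 0 := by linarith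
  have h1 : HasDerivAt (fun z : ℝ => 1 + z) 1 z := (hasDerivAt_id z).const_add 1
  have h2 : HasDerivAt (fun z : ℝ => Real.log (1+z)) (1/(1+z)) z := by
    have := (Real.hasDerivAt_log hne).comp z h1
    simpa [one_div, Function.comp_def] using this
  have h3 : HasDerivAt (fun z : ℝ => z^2/(1+z)) ((2*z*(1+z) - z^2*1)/(1+z)^2) z := by
    exact (hasDerivAt_pow 2 z |>.congr_deriv (by ring)).div h1 hne
  have h4 : HasDerivAt (fun z : ℝ => 2*z) 2 z := by simpa using (hasDerivAt_id z).const_mul (2:ℝ)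
  have := (h4.sub h3).sub (h2.const_mul 2)
  refine HasDerivAt.congr_deriv this ?_
  field_simp
  ring

lemma N_nonpos {z : ℝ} (h1 : -1 < z) (h2 : z ≤ 0) :
    2*z - z^2/(1+z) - 2*Real.log (1+z) ≤ 0 := by
  have hmono : MonotoneOn (fun z : ℝ => 2*z - z^2/(1+z) - 2*Real.log (1+z)) (Set.Ioi (-1:ℝ)) := by
    refine monotoneOn_of_deriv_nonneg (convex_Ioi _) ?_ ?_ ?_
    · intro z hz; exact ((N_hasDeriv hz).continuousAt).continuousWithinAt
    · intro z hz; rw [interior_Ioi] at hz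
      exact (N_hasDeriv hz).differentiableAt.differentiableWithinAt
    · intro z hz; rw [interior_Ioi] at hz
      rw [(N_hasDeriv hz).deriv]; positivity
  have := hmono (Set.mem_Ioi.mpr h1) (Set.mem_Ioi.mpr (by norm_num : (-1:ℝ) < 0)) h2
  simpa using this

-- f(z) = (log(1+z) - z)/z^2 monotone on Ioo (-1) 0
lemma f_hasDeriv {z : ℝ} (hz1 : -1 < z) (hz0 : z ≠ 0) :
    HasDerivAt (fun z : ℝ => (Real.log (1+z) - z)/z^2)
      ((2*z - z^2/(1+z) - 2*Real.log (1+z)) / z^3) z := by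
  have hne : (1:ℝ) + z ≠ 0 := by linarith
  have h1 : HasDerivAt (fun z : ℝ => 1 + z) 1 z := (hasDerivAt_id z).const_add 1
  have h2 : HasDerivAt (fun z : ℝ => Real.log (1+z)) (1/(1+z)) z := by
    have := (Real.hasDerivAt_log hne).comp z h1
    simpa [one_div, Function.comp_def] using this
  have h3 : HasDerivAt (fun z : ℝ => Real.log (1+z) - z) (1/(1+z) - 1) z :=
    h2.sub (hasDerivAt_id z)
  have h4 : HasDerivAt (fun z : ℝ => z^2) (2*z) z := by
    simpa using hasDerivAt_pow 2 z
  have h5 := h3.div h4 (pow_ne_zero 2 hz0)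
  refine HasDerivAt.congr_deriv h5 ?_
  field_simp
  ring

lemma f_mono : MonotoneOn (fun z : ℝ => (Real.log (1+z) - z)/z^2) (Set.Ioo (-1:ℝ) 0) := by
  refine monotoneOn_of_deriv_nonneg (convex_Ioo _ _) ?_ ?_ ?_
  · intro z hz
    exact ((f_hasDeriv hz.1 (ne_of_lt hz.2)).continuousAt).continuousWithinAt
  · intro z hz; rw [interior_Ioo] at hz
    exact (f_hasDeriv hz.1 (ne_of_lt hz.2)).differentiableAt.differentiableWithinAt
  · intro z hz; rw [interior_Ioo] at hz
    rw [(f_hasDeriv hz.1 (ne_of_lt hz.2)).deriv]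
    have hN := N_nonpos hz.1 (le_of_lt hz.2)
    have hz3 : z^3 ≤ 0 := le_of_lt (Odd.pow_neg (by decide) hz.2)
    exact div_nonneg_of_nonpos hN hz3

lemma key_ineq {y lam : ℝ} (hy : |y| ≤ 1) (hl0 : 0 < lam) (hl1 : lam < 1) :
    lam*y + y^2*(Real.log (1-lam) + lam) ≤ Real.log (1 + lam*y) := by
  obtain ⟨hy1, hy2⟩ := abs_le.mp hy
  set z := lam*y with hz
  have hz1 : -lam ≤ z := by nlinarith
  have hz2 : z ≤ lam := by nlinarith
  have hfa : Real.log (1-lam) + lam = lam^2 * ((Real.log (1+(-lam)) - (-lam))/(-lam)^2) := by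
    field_simp
    ring_nf
  have hsq : y^2 * (Real.log (1-lam) + lam) = z^2 * ((Real.log (1+(-lam)) - (-lam))/(-lam)^2) := by
    rw [hfa, hz]; ring
  rcases lt_trichotomy z 0 with hzneg | hzzero | hzpos
  · -- z < 0 : use monotonicity of f on Ioo (-1) 0
    have hmem1 : (-lam) ∈ Set.Ioo (-1:ℝ) 0 := ⟨by linarith, by linarith⟩
    have hmem2 : z ∈ Set.Ioo (-1:ℝ) 0 := ⟨by linarith, hzneg⟩
    have := f_mono hmem1 hmem2 hz1
    simp only at this
    have hzne : z ≠ 0 := ne_of_lt hzneg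
    have h2 : z^2 * ((Real.log (1+(-lam)) - (-lam))/(-lam)^2)
        ≤ z^2 * ((Real.log (1+z) - z)/z^2) := by
      apply mul_le_mul_of_nonneg_left this (sq_nonneg z)
    rw [hsq]
    have : z^2 * ((Real.log (1+z) - z)/z^2) = Real.log (1+z) - z := by
      field_simp
    linarith [h2, this.le]
  · rw [hsq, hzzero]; simp
  · -- z > 0 : use quadratic bounds via P
    have hPa : Real.log (1+(-lam)) - (-lam) + (-lam)^2/2 ≤ 0 :=
      P_nonpos (by linarith) (by linarith)
    have hPz : 0 ≤ Real.log (1+z) - z + z^2/2 := P_nonneg (le_of_lt hzpos)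
    have h1 : Real.log (1-lam) + lam ≤ -lam^2/2 := by
      have : 1 + (-lam) = 1 - lam := by ring
      rw [this] at hPa; linarith
    have h2 : y^2 * (Real.log (1-lam) + lam) ≤ y^2 * (-lam^2/2) := by
      apply mul_le_mul_of_nonneg_left h1 (sq_nonneg y)
    have h3 : y^2 * (-lam^2/2) = -z^2/2 := by rw [hz]; ring
    linarith

lemma key_ineq_exp {y lam : ℝ} (hy : |y| ≤ 1) (hl0 : 0 < lam) (hl1 : lam < 1) :
    Real.exp (lam*y + y^2*(Real.log (1-lam) + lam)) ≤ 1 + lam*y := by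
  have hpos : 0 < 1 + lam*y := by
    obtain ⟨hy1, hy2⟩ := abs_le.mp hy
    nlinarith
  calc Real.exp (lam*y + y^2*(Real.log (1-lam) + lam))
      ≤ Real.exp (Real.log (1 + lam*y)) := Real.exp_le_exp.mpr (key_ineq hy hl0 hl1)
    _ = 1 + lam*y := Real.exp_log hpos

lemma psi_nonneg {x : ℝ} (hx : 0 ≤ x) : 0 ≤ x - Real.log (1+x) := by
  rcases eq_or_lt_of_le hx with h | h
  · simp [← h]
  · have := Real.log_le_sub_one_of_pos (by linarith : (0:ℝ) < 1 + x)
    linarith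

lemma bernoulli_log {L c : ℝ} (hL0 : 0 < L) (hL1 : L < 1) (hc0 : 0 ≤ c) (hc1 : c ≤ 1) :
    c * Real.log (1-L) ≤ Real.log (1-c*L) := by
  have h1 : ((1:ℝ)+(-L)) ^ c ≤ 1 + c*(-L) :=
    rpow_one_add_le_one_add_mul_self (by linarith) hc0 hc1
  have h2 : (0:ℝ) < 1 + (-L) := by linarith
  have h3 : Real.log ((1+(-L)) ^ c) = c * Real.log (1+(-L)) := Real.log_rpow h2 c
  have h4 : Real.log ((1+(-L)) ^ c) ≤ Real.log (1 + c*(-L)) :=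
    Real.log_le_log (Real.rpow_pos_of_pos h2 c) h1
  rw [h3] at h4
  have e1 : (1:ℝ)+(-L) = 1 - L := by ring
  have e2 : (1:ℝ)+c*(-L) = 1 - c*L := by ring
  rw [e1, e2] at h4
  exact h4

lemma stepA {α : ℝ} (hα0 : 0 < α) (hα1 : α < 1) {Zabs S lam : ℝ} (hS : 0 < S) (hZ : 0 < Zabs)
    (hlam_le : lam ≤ Zabs/(S+Zabs)) (hlam_ge : α * (Zabs/(S+Zabs)) ≤ lam) (hlam0 : 0 < lam) :
    α * (Zabs/S - Real.log (1+Zabs/S)) * S ≤ lam*Zabs + S*(Real.log (1-lam)+lam) := by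
  set L : ℝ := Zabs/(S+Zabs) with hLdef
  have hSZ : 0 < S + Zabs := by linarith
  have hL0 : 0 < L := div_pos hZ hSZ
  have hL1 : L < 1 := (div_lt_one hSZ).mpr (by linarith)
  set c : ℝ := lam / L with hcdef
  have hc0 : 0 < c := div_pos hlam0 hL0
  have hc1 : c ≤ 1 := (div_le_one hL0).mpr hlam_le
  have hcα : α ≤ c := by
    rw [hcdef, le_div_iff₀ hL0]
    linarith [hlam_ge]
  have hlamc : lam = c * L := by rw [hcdef]; field_simp
  -- Bernoulli
  have hber : c * Real.log (1-L) ≤ Real.log (1-lam) := by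
    have := bernoulli_log hL0 hL1 (le_of_lt hc0) hc1
    rwa [← hlamc] at this
  -- identities
  have hlog1 : Real.log (1-L) = -Real.log (1+Zabs/S) := by
    have e1 : 1 - L = S/(S+Zabs) := by
      rw [hLdef]; field_simp; ring
    have e2 : 1 + Zabs/S = (S+Zabs)/S := by field_simp
    rw [e1, e2, Real.log_div (ne_of_gt hS) (ne_of_gt hSZ),
      Real.log_div (ne_of_gt hSZ) (ne_of_gt hS)]
    ring
  have hLZ : L * (Zabs + S) = Zabs := by
    rw [hLdef]
    rw [div_mul_eq_mul_div, div_eq_iff (by linarith : S + Zabs ≠ 0)]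
    ring
  have hψ : 0 ≤ Zabs/S - Real.log (1+Zabs/S) :=
    psi_nonneg (le_of_lt (div_pos hZ hS))
  -- chain
  have key : c * ((Zabs/S - Real.log (1+Zabs/S)) * S) ≤ lam*Zabs + S*(Real.log (1-lam)+lam) := by
    have expand : c * ((Zabs/S - Real.log (1+Zabs/S)) * S)
        = c * (Zabs - S * Real.log (1+Zabs/S)) := by
      rw [sub_mul, div_mul_cancel₀ _ (ne_of_gt hS)]; ring
    have expand2 : c * (Zabs - S * Real.log (1+Zabs/S))
        = lam*Zabs + S*(c * Real.log (1-L)) + S*lam := by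
      rw [hlog1, hlamc]
      have : c * L * Zabs + c * L * S = c * Zabs := by
        have := hLZ
        nlinarith
      nlinarith [this]
    rw [expand, expand2]
    nlinarith [hber, hS]
  calc α * (Zabs/S - Real.log (1+Zabs/S)) * S
      ≤ c * ((Zabs/S - Real.log (1+Zabs/S)) * S) := by
        rcases le_or_gt 0 ((Zabs/S - Real.log (1+Zabs/S)) * S) with h | h
        · nlinarith
        · nlinarith [mul_nonneg hψ (le_of_lt hS)]
    _ ≤ _ := key


lemma ville {Ω : Type*} {m0 : MeasurableSpace Ω} {μ : MeasureTheory.Measure Ω}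
    [MeasureTheory.IsProbabilityMeasure μ]
    {𝒢 : MeasureTheory.Filtration ℕ m0} {f : ℕ → Ω → ℝ}
    (hf : MeasureTheory.Submartingale f 𝒢 μ) (hnn : 0 ≤ f) (hint : ∀ n, μ[f n] ≤ 1)
    {r : ℝ} (hr : 0 < r) :
    μ {ω | ∃ t, r ≤ f t ω} ≤ ENNReal.ofReal (1/r) := by
  set ε : ℝ≥0 := r.toNNReal with hε
  have hεr : (ε : ℝ) = r := Real.coe_toNNReal r hr.le
  set A : ℕ → Set Ω := fun n =>
    {ω | (ε : ℝ) ≤ (Finset.range (n+1)).sup' Finset.nonempty_range_add_one fun k => f k ω} with hA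
  have hAmono : Monotone A := by
    apply monotone_nat_of_le_succ
    intro n ω hω
    exact le_trans hω (Finset.sup'_mono (fun k => f k ω) (Finset.range_subset_range.mpr (Nat.le_succ _))
      Finset.nonempty_range_add_one)
  have hset : {ω | ∃ t, r ≤ f t ω} = ⋃ n, A n := by
    ext ω
    simp only [Set.mem_setOf_eq, Set.mem_iUnion, hA, hεr]
    constructor
    · rintro ⟨t, ht⟩
      exact ⟨t, le_trans ht (Finset.le_sup' (fun k => f k ω) (Finset.self_mem_range_succ t))⟩
    · rintro ⟨n, hn⟩
      obtain ⟨k, hk, hkeq⟩ := Finset.exists_mem_eq_sup' (Finset.nonempty_range_add_one (n := n))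
        (fun k => f k ω)
      exact ⟨k, by rw [hkeq] at hn; exact hn⟩
  have hAbound : ∀ n, μ (A n) ≤ ENNReal.ofReal (1/r) := by
    intro n
    have h1 := MeasureTheory.maximal_ineq hf hnn (ε := ε) n
    have h2 : ∫ ω in A n, f n ω ∂μ ≤ ∫ ω, f n ω ∂μ :=
      MeasureTheory.setIntegral_le_integral (hf.integrable n)
        (Filter.Eventually.of_forall fun ω => hnn n ω)
    have h3 : (ε : ℝ≥0∞) * μ (A n) ≤ 1 := by
      calc (ε : ℝ≥0∞) * μ (A n) = ε • μ (A n) := rfl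
        _ ≤ ENNReal.ofReal (∫ ω in A n, f n ω ∂μ) := h1
        _ ≤ ENNReal.ofReal 1 := ENNReal.ofReal_le_ofReal (le_trans h2 (hint n))
        _ = 1 := ENNReal.ofReal_one
    have hεne : (ε : ℝ≥0∞) ≠ 0 := by
      simp only [ne_eq, ENNReal.coe_eq_zero]
      intro h
      rw [hε, Real.toNNReal_eq_zero] at h
      linarith
    have h4 : μ (A n) ≤ (ε : ℝ≥0∞)⁻¹ := by
      calc μ (A n) = (ε:ℝ≥0∞)⁻¹ * ((ε:ℝ≥0∞) * μ (A n)) := by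
            rw [← mul_assoc, ENNReal.inv_mul_cancel hεne ENNReal.coe_ne_top, one_mul]
        _ ≤ (ε:ℝ≥0∞)⁻¹ * 1 := mul_le_mul_right h3 _
        _ = (ε:ℝ≥0∞)⁻¹ := mul_one _
    have h5 : (ε : ℝ≥0∞) = ENNReal.ofReal r := rfl
    rw [h5] at h4
    rwa [one_div, ENNReal.ofReal_inv_of_pos hr]
  rw [hset, hAmono.measure_iUnion]
  exact iSup_le hAbound

section Wealth

variable {Ω : Type*} {m0 : MeasurableSpace Ω} {μ : MeasureTheory.Measure Ω}
  [MeasureTheory.IsProbabilityMeasure μ] {ℱ : MeasureTheory.Filtration ℕ m0}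

lemma wealth_bound (gb : ℕ → Ω → ℝ)
    (hmeas : ∀ t, StronglyMeasurable[ℱ (t + 1)] (gb (t + 1)))
    (hbdd : ∀ t ω, |gb (t + 1) ω| ≤ 1)
    (hmds : ∀ t, μ[gb (t + 1) | ℱ t] =ᵐ[μ] 0)
    {e : ℝ} (he : |e| < 1) {r : ℝ} (hr : 0 < r) :
    μ {ω | ∃ t, r ≤ ∏ i ∈ Finset.range t, (1 + e * gb (i+1) ω)} ≤ ENNReal.ofReal (1/r) := by
  set W : ℕ → Ω → ℝ := fun t ω => ∏ i ∈ Finset.range t, (1 + e * gb (i+1) ω) with hW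
  have hfac_nn : ∀ i ω, 0 ≤ 1 + e * gb (i+1) ω := by
    intro i ω
    have h1 : |e * gb (i+1) ω| ≤ |e| := by
      rw [abs_mul]
      calc |e| * |gb (i+1) ω| ≤ |e| * 1 := by
            exact mul_le_mul_of_nonneg_left (hbdd i ω) (abs_nonneg e)
        _ = |e| := mul_one _
    have := abs_le.mp h1
    linarith [abs_nonneg e]
  have hfac_le : ∀ i ω, 1 + e * gb (i+1) ω ≤ 2 := by
    intro i ω
    have h1 : |e * gb (i+1) ω| ≤ |e| := by
      rw [abs_mul]
      calc |e| * |gb (i+1) ω| ≤ |e| * 1 :=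
            mul_le_mul_of_nonneg_left (hbdd i ω) (abs_nonneg e)
        _ = |e| := mul_one _
    have := abs_le.mp h1
    linarith
  have hWnn : ∀ t ω, 0 ≤ W t ω := fun t ω =>
    Finset.prod_nonneg fun i _ => hfac_nn i ω
  have hWle : ∀ t ω, W t ω ≤ 2^t := by
    intro t ω
    calc W t ω ≤ ∏ _i ∈ Finset.range t, (2:ℝ) :=
          Finset.prod_le_prod (fun i _ => hfac_nn i ω) (fun i _ => hfac_le i ω)
      _ = 2^t := by rw [Finset.prod_const, Finset.card_range]
  have hWmeas : ∀ t, StronglyMeasurable[ℱ t] (W t) := by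
    intro t
    have hWt : W t = ∏ i ∈ Finset.range t, (fun ω => 1 + e * gb (i+1) ω) := by
      funext ω; rw [Finset.prod_apply]
    rw [hWt]
    apply Finset.stronglyMeasurable_prod
    intro i hi
    have hle : i + 1 ≤ t := Finset.mem_range.mp hi
    exact (stronglyMeasurable_const.add
      (stronglyMeasurable_const.mul ((hmeas i).mono (ℱ.mono hle))))
  have hWint : ∀ t, MeasureTheory.Integrable (W t) μ := by
    intro t
    refine (MeasureTheory.integrable_const ((2:ℝ)^t)).mono'
      ((hWmeas t).mono (ℱ.le t)).aestronglyMeasurable ?_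
    exact Filter.Eventually.of_forall fun ω => by
      rw [Real.norm_eq_abs, abs_of_nonneg (hWnn t ω)]; exact hWle t ω
  have hfacint : ∀ n, MeasureTheory.Integrable (fun ω => W n ω * (e * gb (n+1) ω)) μ := by
    intro n
    refine (MeasureTheory.integrable_const ((2:ℝ)^n * |e|)).mono' ?_ ?_
    · exact (((hWmeas n).mono (ℱ.le n)).mul
        (stronglyMeasurable_const.mul ((hmeas n).mono (ℱ.le (n+1))))).aestronglyMeasurable
    · refine Filter.Eventually.of_forall fun ω => ?_
      rw [Real.norm_eq_abs, abs_mul, abs_mul]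
      have h1 : |W n ω| ≤ 2^n := by rw [abs_of_nonneg (hWnn n ω)]; exact hWle n ω
      have h2 : |e| * |gb (n+1) ω| ≤ |e| * 1 :=
        mul_le_mul_of_nonneg_left (hbdd n ω) (abs_nonneg e)
      calc |W n ω| * (|e| * |gb (n+1) ω|) ≤ 2^n * (|e| * 1) := by
            apply mul_le_mul h1 h2 (by positivity) (by positivity)
        _ = 2^n * |e| := by ring
  have hmart : MeasureTheory.Martingale W ℱ μ := by
    apply MeasureTheory.martingale_nat (fun t => hWmeas t) hWint
    intro n
    have hsucc : W (n+1) = W n + fun ω => W n ω * (e * gb (n+1) ω) := by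
      funext ω
      simp only [hW, Finset.prod_range_succ, Pi.add_apply]
      ring
    rw [hsucc]
    have h1 : μ[W n + (fun ω => W n ω * (e * gb (n+1) ω)) | ℱ n]
        =ᵐ[μ] μ[W n | ℱ n] + μ[fun ω => W n ω * (e * gb (n+1) ω) | ℱ n] :=
      MeasureTheory.condExp_add (hWint n) (hfacint n) _
    have h2 : μ[W n | ℱ n] =ᵐ[μ] W n := by
      rw [MeasureTheory.condExp_of_stronglyMeasurable (ℱ.le n) (hWmeas n) (hWint n)]
    have h3 : μ[fun ω => W n ω * (e * gb (n+1) ω) | ℱ n]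
        =ᵐ[μ] W n * μ[fun ω => e * gb (n+1) ω | ℱ n] := by
      exact MeasureTheory.condExp_mul_of_stronglyMeasurable_left (hWmeas n) (hfacint n)
        ((MeasureTheory.integrable_const (|e|)).mono'
          ((stronglyMeasurable_const.mul ((hmeas n).mono (ℱ.le (n+1)))).aestronglyMeasurable)
          (Filter.Eventually.of_forall fun ω => by
            rw [Real.norm_eq_abs, abs_mul]
            calc |e| * |gb (n+1) ω| ≤ |e| * 1 :=
                  mul_le_mul_of_nonneg_left (hbdd n ω) (abs_nonneg e)
              _ = |e| := mul_one _))
    have h4 : μ[fun ω => e * gb (n+1) ω | ℱ n] =ᵐ[μ] 0 := by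
      have hsmul : (fun ω => e * gb (n+1) ω) = e • gb (n+1) := by
        funext ω; simp
      rw [hsmul]
      calc μ[e • gb (n+1) | ℱ n] =ᵐ[μ] e • μ[gb (n+1) | ℱ n] :=
            MeasureTheory.condExp_smul e (gb (n+1)) _
        _ =ᵐ[μ] e • (0 : Ω → ℝ) := by
            filter_upwards [hmds n] with ω hω
            simp [hω]
        _ = 0 := by funext ω; simp
    refine Filter.EventuallyEq.symm ?_
    calc μ[W n + (fun ω => W n ω * (e * gb (n+1) ω)) | ℱ n]
        =ᵐ[μ] μ[W n | ℱ n] + μ[fun ω => W n ω * (e * gb (n+1) ω) | ℱ n] := h1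
      _ =ᵐ[μ] W n + W n * μ[fun ω => e * gb (n+1) ω | ℱ n] := h2.add h3
      _ =ᵐ[μ] W n + W n * (0 : Ω → ℝ) := by
          filter_upwards [h4] with ω hω
          simp only [Pi.add_apply, Pi.mul_apply, hω, Pi.zero_apply]
      _ = W n := by funext ω; simp
  have hint1 : ∀ n, μ[W n] ≤ 1 := by
    intro n
    have h0 : μ[W n | ℱ 0] =ᵐ[μ] W 0 := hmart.condExp_ae_eq (Nat.zero_le n)
    have : μ[W n] = μ[W 0] := by
      rw [← MeasureTheory.integral_condExp (ℱ.le 0)]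
      exact MeasureTheory.integral_congr_ae h0
    rw [this]
    have : W 0 = fun _ => 1 := by funext ω; simp [hW]
    rw [this]
    simp
  exact ville hmart.submartingale (fun t ω => hWnn t ω) hint1 hr

end Wealth

lemma sum_w_le_one {A B : ℝ} (hA : 0 < A) (hB : 0 < B) (n : ℕ) :
    ∑ k ∈ Finset.range n, A*B/(A+(k+1)*B)^2 ≤ 1 := by
  have hterm : ∀ k : ℕ, A*B/(A+(k+1)*B)^2 ≤ A/(A+k*B) - A/(A+(k+1)*B) := by
    intro k
    have hd1 : (0:ℝ) < A + k*B := by positivity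
    have hd2 : (0:ℝ) < A + (k+1)*B := by
      have : (0:ℝ) ≤ (k:ℝ) := Nat.cast_nonneg k
      nlinarith
    have heq : A/(A+k*B) - A/(A+(k+1)*B) = A*B/((A+k*B)*(A+(k+1)*B)) := by
      field_simp
      ring
    rw [heq]
    apply div_le_div_of_nonneg_left (by positivity) (by positivity)
    nlinarith [hd1, hd2, hB]
  calc ∑ k ∈ Finset.range n, A*B/(A+(k+1)*B)^2
      ≤ ∑ k ∈ Finset.range n, (A/(A+k*B) - A/(A+(k+1)*B)) :=
        Finset.sum_le_sum fun k _ => hterm k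
    _ = A/(A+0*B) - A/(A+n*B) := by
        have := Finset.sum_range_sub' (fun k : ℕ => A/(A+k*B)) n
        push_cast at this ⊢
        rw [← this]
    _ ≤ 1 := by
        have h1 : A/(A+0*B) = 1 := by
          rw [zero_mul, add_zero, div_self (ne_of_gt hA)]
        have h2 : 0 ≤ A/(A+n*B) := by positivity
        linarith

lemma prod_exp_lower {t : ℕ} {y : ℕ → ℝ} (hy : ∀ i, |y i| ≤ 1) {lam sg : ℝ}
    (hl0 : 0 < lam) (hl1 : lam < 1) (hsg : sg = 1 ∨ sg = -1) :
    Real.exp (lam * (sg * ∑ i ∈ Finset.range t, y i)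
        + (∑ i ∈ Finset.range t, (y i)^2) * (Real.log (1-lam)+lam))
      ≤ ∏ i ∈ Finset.range t, (1 + sg * lam * y i) := by
  have hsg2 : sg^2 = 1 := by rcases hsg with h | h <;> rw [h] <;> norm_num
  have hexp : lam * (sg * ∑ i ∈ Finset.range t, y i)
      + (∑ i ∈ Finset.range t, (y i)^2) * (Real.log (1-lam)+lam)
      = ∑ i ∈ Finset.range t,
          (lam * (sg * y i) + (sg * y i)^2 * (Real.log (1-lam)+lam)) := by
    have e1 : ∀ i ∈ Finset.range t, lam * (sg * y i) + (sg * y i)^2 * (Real.log (1-lam)+lam)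
        = lam * sg * y i + (y i)^2 * (Real.log (1-lam)+lam) := by
      intro i _; rw [mul_pow, hsg2, one_mul]; ring
    rw [Finset.sum_congr rfl e1, Finset.sum_add_distrib, ← Finset.mul_sum, ← Finset.sum_mul]
    ring
  rw [hexp, Real.exp_sum]
  apply Finset.prod_le_prod (fun i _ => (Real.exp_pos _).le)
  intro i _
  have hyi : |sg * y i| ≤ 1 := by
    rw [abs_mul]
    rcases hsg with h | h <;> simp [h, hy i]
  calc Real.exp (lam * (sg * y i) + (sg * y i)^2 * (Real.log (1-lam)+lam))
      ≤ 1 + lam * (sg * y i) := key_ineq_exp hyi hl0 hl1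
    _ = 1 + sg * lam * y i := by ring

lemma pointwise_step {γ α δ : ℝ} (hγ : 1 < γ) (hα0 : 0 < α) (hα1 : α < 1)
    (hδ0 : 0 < δ) {Z S lam : ℝ} {k : ℕ} (hS : 0 < S) (hZ : Z ≠ 0)
    (hlam : lam = α^(k+1))
    (hle : α^(k+1) ≤ |Z|/(S+|Z|)) (hgt : |Z|/(S+|Z|) < α^k)
    (hwealth : lam*|Z| + S*(Real.log (1-lam)+lam)
      < Real.log (2/(δ * (Real.log γ * Real.log (1/α)
          / (Real.log γ + ((k:ℝ)+1) * Real.log (1/α))^2)))) :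
    α * (|Z| / S - Real.log (1 + |Z| / S)) * S
      ≤ Real.log (1 / δ)
        + Real.log ((Real.log γ + Real.log (1 / α) + Real.log (1 + S / |Z|)) ^ 2
            / (0.5 * Real.log γ * Real.log (1 / α))) := by
  set A : ℝ := Real.log γ with hAdef
  set B : ℝ := Real.log (1/α) with hBdef
  have hA : 0 < A := Real.log_pos hγ
  have hB : 0 < B := Real.log_pos (by rw [lt_div_iff₀ hα0]; linarith)
  have hZ0 : 0 < |Z| := abs_pos.mpr hZ
  have hSZ : 0 < S + |Z| := by linarith
  have hLs0 : 0 < |Z|/(S+|Z|) := div_pos hZ0 hSZ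
  have hlam0 : 0 < lam := by rw [hlam]; positivity
  have hlam1 : lam < 1 := by
    rw [hlam]; exact pow_lt_one₀ hα0.le hα1 (Nat.succ_ne_zero k)
  -- step A
  have h1 : α * (|Z| / S - Real.log (1 + |Z| / S)) * S
      ≤ lam*|Z| + S*(Real.log (1-lam)+lam) := by
    apply stepA hα0 hα1 hS hZ0 (by rw [hlam]; exact hle)
    · calc α * (|Z|/(S+|Z|)) ≤ α * α^k := by
            apply mul_le_mul_of_nonneg_left hgt.le hα0.le
        _ = α^(k+1) := by rw [pow_succ]; ring
        _ = lam := hlam.symm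
    · exact hlam0
  -- weight algebra
  set w : ℝ := A * B / (A + ((k:ℝ)+1) * B)^2 with hwdef
  have hden : (0:ℝ) < A + ((k:ℝ)+1) * B := by positivity
  have hw0 : 0 < w := by positivity
  have h2 : Real.log (2/(δ * w)) = Real.log (1/δ) + Real.log (2/w) := by
    have : 2/(δ * w) = (1/δ) * (2/w) := by field_simp
    rw [this, Real.log_mul (by positivity) (by positivity)]
  have h3 : 2/w = (A + ((k:ℝ)+1) * B)^2 / (0.5 * A * B) := by
    rw [hwdef]
    field_simp
    ring
  -- kB ≤ LL
  set LL : ℝ := Real.log (1 + S/|Z|) with hLLdef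
  have hLLeq : LL = -Real.log (|Z|/(S+|Z|)) := by
    rw [hLLdef]
    have e1 : 1 + S/|Z| = (S+|Z|)/|Z| := by field_simp; ring
    rw [e1, Real.log_div (ne_of_gt hSZ) (ne_of_gt hZ0),
      Real.log_div (ne_of_gt hZ0) (ne_of_gt hSZ)]
    ring
  have hkB : (k : ℝ) * B ≤ LL := by
    have hlog : Real.log (|Z|/(S+|Z|)) < Real.log (α^k) := Real.log_lt_log hLs0 hgt
    rw [Real.log_pow] at hlog
    have hBα : Real.log α = -B := by
      rw [hBdef, one_div, Real.log_inv]; ring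
    rw [hBα] at hlog
    rw [hLLeq]
    push_cast at hlog ⊢
    linarith
  have h5 : (A + ((k:ℝ)+1) * B)^2 ≤ (A + B + LL)^2 := by
    have hle2 : A + ((k:ℝ)+1) * B ≤ A + B + LL := by linarith
    exact pow_le_pow_left₀ hden.le hle2 2
  have h4 : Real.log ((A + ((k:ℝ)+1) * B)^2 / (0.5 * A * B))
      ≤ Real.log ((A + B + LL)^2 / (0.5 * A * B)) := by
    apply Real.log_le_log (by positivity)
    exact div_le_div_of_nonneg_right h5 (by positivity)
  refine le_of_lt ?_
  calc α * (|Z| / S - Real.log (1 + |Z| / S)) * S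
      ≤ lam*|Z| + S*(Real.log (1-lam)+lam) := h1
    _ < Real.log (2/(δ * w)) := hwealth
    _ = Real.log (1/δ) + Real.log (2/w) := h2
    _ = Real.log (1/δ) + Real.log ((A + ((k:ℝ)+1) * B)^2 / (0.5 * A * B)) := by rw [h3]
    _ ≤ Real.log (1/δ) + Real.log ((A + B + LL)^2 / (0.5 * A * B)) := by linarith [h4]
    _ = _ := by rw [hAdef, hBdef, hLLdef]

set_option maxHeartbeats 2000000 in
/-- Time-uniform concentration from the betting wealth bound: for a martingale
difference sequence `(g_{t+1})` with `|g_{t+1}| ≤ 1` a.s., with probability at least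
`1 − δ`, simultaneously for all `t ≥ 1` with `Σ_{i<t} g_{i+1} ≠ 0`, writing
`S_t = Σ_{i<t} g_{i+1}²` and `Ψ(x) = x − log(1+x)`:
`α·Ψ(|Σ g|/S_t)·S_t ≤ log(1/δ)
  + log((log γ + log(1/α) + log(1 + S_t/|Σ g|))²/(0.5·log γ·log(1/α)))`. -/
theorem time_uniform_concentration {Ω : Type*} {m0 : MeasurableSpace Ω}
    {μ : Measure Ω} [IsProbabilityMeasure μ] (ℱ : Filtration ℕ m0)
    (γ α δ : ℝ) (hγ : 1 < γ) (hα : α ∈ Set.Ioo (0 : ℝ) 1) (hδ : δ ∈ Set.Ioo (0 : ℝ) 1)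
    (g : ℕ → Ω → ℝ)
    (hgadapted : ∀ t, StronglyMeasurable[ℱ (t + 1)] (g (t + 1)))
    (hgbdd : ∀ t, ∀ᵐ ω ∂μ, |g (t + 1) ω| ≤ 1)
    (hmds : ∀ t, μ[g (t + 1) | ℱ t] =ᵐ[μ] 0) :
    ENNReal.ofReal (1 - δ) ≤
      μ {ω | ∀ t : ℕ, 1 ≤ t →
          ∀ Z S : ℝ, Z = ∑ i ∈ Finset.range t, g (i + 1) ω →
            S = ∑ i ∈ Finset.range t, (g (i + 1) ω) ^ 2 →
            Z ≠ 0 →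
            α * (|Z| / S - Real.log (1 + |Z| / S)) * S
              ≤ Real.log (1 / δ)
                + Real.log ((Real.log γ + Real.log (1 / α)
                      + Real.log (1 + S / |Z|)) ^ 2
                    / (0.5 * Real.log γ * Real.log (1 / α)))} := by
  obtain ⟨hα0, hα1⟩ := hα
  obtain ⟨hδ0, hδ1⟩ := hδ
  have hA : 0 < Real.log γ := Real.log_pos hγ
  have hB : 0 < Real.log (1/α) := Real.log_pos (by rw [lt_div_iff₀ hα0]; linarith)
  -- truncated version of g
  set gb : ℕ → Ω → ℝ := fun t ω => max (-1) (min 1 (g t ω)) with hgb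
  have hbmeas : ∀ t, StronglyMeasurable[ℱ (t+1)] (gb (t+1)) := fun t =>
    (continuous_const.max (continuous_const.min continuous_id)).comp_stronglyMeasurable
      (hgadapted t)
  have hbbdd : ∀ t ω, |gb (t+1) ω| ≤ 1 := by
    intro t ω
    rw [abs_le]
    exact ⟨le_max_left _ _, max_le (by norm_num) (min_le_left _ _)⟩
  have hbae : ∀ t, gb (t+1) =ᵐ[μ] g (t+1) := by
    intro t
    filter_upwards [hgbdd t] with ω hω
    obtain ⟨h1, h2⟩ := abs_le.mp hω
    simp only [hgb]
    rw [min_eq_right h2, max_eq_right h1]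
  have hbmds : ∀ t, μ[gb (t+1) | ℱ t] =ᵐ[μ] 0 := fun t =>
    (condExp_congr_ae (hbae t)).trans (hmds t)
  -- weights and events
  set w : ℕ → ℝ := fun k =>
    Real.log γ * Real.log (1/α) / (Real.log γ + ((k:ℝ)+1) * Real.log (1/α))^2 with hwdef
  have hw0 : ∀ k, 0 < w k := by
    intro k
    have : (0:ℝ) < Real.log γ + ((k:ℝ)+1) * Real.log (1/α) := by positivity
    positivity
  set sg : Bool → ℝ := fun s => if s then 1 else -1 with hsgdef
  have hsgval : ∀ s, sg s = 1 ∨ sg s = -1 := by intro s; cases s <;> simp [hsgdef]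
  set E : ℕ → Bool → Set Ω := fun k s =>
    {ω | ∃ t, 2/(δ * w k) ≤ ∏ i ∈ Finset.range t,
      (1 + sg s * α^(k+1) * gb (i+1) ω)} with hE
  have hr0 : ∀ k, 0 < 2/(δ * w k) := fun k =>
    div_pos two_pos (mul_pos hδ0 (hw0 k))
  have hEbound : ∀ k s, μ (E k s) ≤ ENNReal.ofReal (δ * w k / 2) := by
    intro k s
    have he : |sg s * α^(k+1)| < 1 := by
      have h1 : |sg s| = 1 := by rcases hsgval s with h | h <;> rw [h] <;> norm_num
      rw [abs_mul, h1, one_mul, abs_of_pos (by positivity)]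
      exact pow_lt_one₀ hα0.le hα1 (Nat.succ_ne_zero k)
    have h := wealth_bound (ℱ := ℱ) gb hbmeas hbbdd hbmds he (hr0 k)
    rw [one_div_div] at h
    exact h
  -- measurability of events
  have hgbm0 : ∀ i : ℕ, Measurable (gb (i+1)) := fun i =>
    ((hbmeas i).mono (ℱ.le (i+1))).measurable
  have hEmeas : ∀ k s, MeasurableSet (E k s) := by
    intro k s
    have hrw : E k s = ⋃ t, {ω | 2/(δ * w k) ≤ ∏ i ∈ Finset.range t,
        (1 + sg s * α^(k+1) * gb (i+1) ω)} := by
      ext ω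
      rw [Set.mem_iUnion]
      exact Iff.rfl
    rw [hrw]
    refine MeasurableSet.iUnion fun t => measurableSet_le measurable_const ?_
    exact Finset.measurable_prod _ fun i _ =>
      measurable_const.add (measurable_const.mul (hgbm0 i))
  set Bad : Set Ω := ⋃ k, ⋃ s, E k s with hBad
  have hBadmeas : MeasurableSet Bad :=
    MeasurableSet.iUnion fun k => MeasurableSet.iUnion fun s => hEmeas k s
  have hBadbound : μ Bad ≤ ENNReal.ofReal δ := by
    calc μ Bad ≤ ∑' k, μ (⋃ s, E k s) := measure_iUnion_le _
      _ ≤ ∑' k, ENNReal.ofReal (δ * w k) := by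
          apply ENNReal.tsum_le_tsum
          intro k
          have hun : (⋃ s, E k s) = E k true ∪ E k false := by
            ext ω
            simp only [Set.mem_iUnion, Set.mem_union, Bool.exists_bool, or_comm]
          rw [hun]
          calc μ (E k true ∪ E k false) ≤ μ (E k true) + μ (E k false) :=
                measure_union_le _ _
            _ ≤ ENNReal.ofReal (δ * w k / 2) + ENNReal.ofReal (δ * w k / 2) :=
                add_le_add (hEbound k true) (hEbound k false)
            _ = ENNReal.ofReal (δ * w k) := by
                rw [← ENNReal.ofReal_add
                  (le_of_lt (div_pos (mul_pos hδ0 (hw0 k)) two_pos))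
                  (le_of_lt (div_pos (mul_pos hδ0 (hw0 k)) two_pos))]
                norm_num
      _ ≤ ENNReal.ofReal δ := by
          rw [ENNReal.tsum_eq_iSup_sum]
          apply iSup_le
          intro F
          obtain ⟨n, hn⟩ := F.exists_nat_subset_range
          calc ∑ k ∈ F, ENNReal.ofReal (δ * w k)
              = ENNReal.ofReal (∑ k ∈ F, δ * w k) :=
                (ENNReal.ofReal_sum_of_nonneg fun k _ => le_of_lt (mul_pos hδ0 (hw0 k))).symm
            _ ≤ ENNReal.ofReal δ := by
                apply ENNReal.ofReal_le_ofReal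
                have h1 : ∑ k ∈ F, δ * w k ≤ ∑ k ∈ Finset.range n, δ * w k :=
                  Finset.sum_le_sum_of_subset_of_nonneg hn
                    (fun k _ _ => le_of_lt (mul_pos hδ0 (hw0 k)))
                have h2 : ∑ k ∈ Finset.range n, δ * w k = δ * ∑ k ∈ Finset.range n, w k := by
                  rw [Finset.mul_sum]
                have h3 := sum_w_le_one hA hB n
                calc ∑ k ∈ F, δ * w k ≤ δ * ∑ k ∈ Finset.range n, w k := by
                      rw [← h2]; exact h1
                  _ ≤ δ * 1 := mul_le_mul_of_nonneg_left h3 hδ0.le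
                  _ = δ := mul_one δ
  -- a.e. set where g = gb
  have hae : μ {ω | ∀ t : ℕ, g (t+1) ω = gb (t+1) ω}ᶜ = 0 := by
    have h : ∀ᵐ ω ∂μ, ∀ t : ℕ, g (t+1) ω = gb (t+1) ω := by
      rw [MeasureTheory.ae_all_iff]
      intro t
      filter_upwards [hbae t] with ω h using h.symm
    rw [MeasureTheory.ae_iff] at h
    rw [Set.compl_setOf]
    exact h
  -- pointwise inclusion
  have hsubset : Badᶜ ∩ {ω | ∀ t : ℕ, g (t+1) ω = gb (t+1) ω} ⊆
      {ω | ∀ t : ℕ, 1 ≤ t →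
          ∀ Z S : ℝ, Z = ∑ i ∈ Finset.range t, g (i + 1) ω →
            S = ∑ i ∈ Finset.range t, (g (i + 1) ω) ^ 2 →
            Z ≠ 0 →
            α * (|Z| / S - Real.log (1 + |Z| / S)) * S
              ≤ Real.log (1 / δ)
                + Real.log ((Real.log γ + Real.log (1 / α)
                      + Real.log (1 + S / |Z|)) ^ 2
                    / (0.5 * Real.log γ * Real.log (1 / α)))} := by
    rintro ω ⟨hnb, hge⟩
    intro t ht Z S hZdef hSdef hZne
    have hge' : ∀ i : ℕ, g (i+1) ω = gb (i+1) ω := hge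
    have hZb : Z = ∑ i ∈ Finset.range t, gb (i+1) ω := by
      rw [hZdef]; exact Finset.sum_congr rfl fun i _ => hge' i
    have hSb : S = ∑ i ∈ Finset.range t, (gb (i+1) ω)^2 := by
      rw [hSdef]; exact Finset.sum_congr rfl fun i _ => by rw [hge' i]
    have hS0 : 0 < S := by
      rcases lt_or_eq_of_le (by rw [hSb]; positivity : (0:ℝ) ≤ S) with h | h
      · exact h
      · exfalso
        apply hZne
        have hall : ∀ i ∈ Finset.range t, (gb (i+1) ω)^2 = 0 := by
          rw [← Finset.sum_eq_zero_iff_of_nonneg (fun i _ => sq_nonneg _)]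
          rw [← hSb, ← h]
        rw [hZb]
        apply Finset.sum_eq_zero
        intro i hi
        exact pow_eq_zero_iff (n := 2) (by norm_num) |>.mp (hall i hi)
    have hZ0 : 0 < |Z| := abs_pos.mpr hZne
    have hSZ : 0 < S + |Z| := by linarith
    have hLs0 : 0 < |Z|/(S+|Z|) := div_pos hZ0 hSZ
    have hLs1 : |Z|/(S+|Z|) < 1 := (div_lt_one hSZ).mpr (by linarith)
    have hex : ∃ m : ℕ, α^m ≤ |Z|/(S+|Z|) := by
      obtain ⟨n, hn⟩ := exists_pow_lt_of_lt_one hLs0 hα1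
      exact ⟨n, hn.le⟩
    have hmspec : α^(Nat.find hex) ≤ |Z|/(S+|Z|) := Nat.find_spec hex
    have hm0 : Nat.find hex ≠ 0 := by
      intro h
      rw [h, pow_zero] at hmspec
      linarith
    set k : ℕ := Nat.find hex - 1 with hkdef
    have hmk : Nat.find hex = k + 1 := by omega
    have hprev : |Z|/(S+|Z|) < α^k := by
      have := Nat.find_min hex (m := k) (by omega)
      push_neg at this
      exact this
    rw [hmk] at hmspec
    -- select the sign
    set s : Bool := decide (0 < Z) with hsdef
    have hsgZ : sg s * Z = |Z| := by
      by_cases h : 0 < Z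
      · have hs1 : s = true := by simp [hsdef, h]
        rw [hs1]
        have : sg true = 1 := by simp [hsgdef]
        rw [this, one_mul, abs_of_pos h]
      · have hneg : Z < 0 := lt_of_le_of_ne (not_lt.mp h) hZne
        have hs1 : s = false := by simp [hsdef, h]
        rw [hs1]
        have : sg false = -1 := by simp [hsgdef]
        rw [this, abs_of_neg hneg]
        ring
    -- ω is not in the bad event
    have hnotin : ω ∉ E k s := fun hmem =>
      hnb (Set.mem_iUnion.mpr ⟨k, Set.mem_iUnion.mpr ⟨s, hmem⟩⟩)
    have hlt : ∏ i ∈ Finset.range t, (1 + sg s * α^(k+1) * gb (i+1) ω)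
        < 2/(δ * w k) := by
      by_contra h
      push_neg at h
      exact hnotin ⟨t, h⟩
    -- wealth lower bound
    have hlam0 : (0:ℝ) < α^(k+1) := by positivity
    have hlam1 : α^(k+1) < 1 := pow_lt_one₀ hα0.le hα1 (Nat.succ_ne_zero k)
    have hexp := prod_exp_lower (t := t) (y := fun i => gb (i+1) ω)
      (fun i => hbbdd i ω) hlam0 hlam1 (hsgval s)
    rw [← hZb, ← hSb] at hexp
    have hexp2 : Real.exp (α^(k+1) * |Z| + S * (Real.log (1-α^(k+1)) + α^(k+1)))
        ≤ ∏ i ∈ Finset.range t, (1 + sg s * α^(k+1) * gb (i+1) ω) := by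
      rw [← hsgZ]
      exact hexp
    have hwealth : α^(k+1)*|Z| + S*(Real.log (1-α^(k+1)) + α^(k+1))
        < Real.log (2/(δ * w k)) := by
      rw [Real.lt_log_iff_exp_lt (hr0 k)]
      exact lt_of_le_of_lt hexp2 hlt
    exact pointwise_step hγ hα0 hα1 hδ0 hS0 hZne rfl hmspec hprev hwealth
  -- put everything together
  calc ENNReal.ofReal (1 - δ) = 1 - ENNReal.ofReal δ := by
        rw [ENNReal.ofReal_sub 1 hδ0.le, ENNReal.ofReal_one]
    _ ≤ 1 - μ Bad := tsub_le_tsub_left hBadbound 1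
    _ = μ Badᶜ := (prob_compl_eq_one_sub hBadmeas).symm
    _ = μ (Badᶜ ∩ {ω | ∀ t : ℕ, g (t+1) ω = gb (t+1) ω}) :=
        (measure_inter_conull hae).symm
    _ ≤ _ := measure_mono hsubset
end

section
/- Fix γ > 1, α ∈ (0,1), and δ ∈ (0,1). Let (g_t)_{t≥1} be a martingale difference sequence with |g_t| ≤ 1 almost surely, and set S_t = Σ_{i=1}^t g_i² and A_t = (log γ + log(1/α) + log(1 + √(α S_t/2)))² / (0.5·log γ·log(1/α)). Then with probability at least 1 − δ, simultaneously for all t ≥ 1 with S_t > 0: either |Σ_{i=1}^t g_i| ≤ √(2 S_t/α), or Ψ(|Σ_{i=1}^t g_i| / S_t) ≤ (1/(α S_t))·log(A_t/δ), where Ψ(x) = x − log(1+x). -/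
set_option maxHeartbeats 1000000

open MeasureTheory Real Set Finset

namespace ConcPsiAux

noncomputable def phi (l : ℝ) : ℝ := -l - Real.log (1 - l)

lemma phi_nonneg {l : ℝ} (h1 : l < 1) : 0 ≤ phi l := by
  have h := Real.log_le_sub_one_of_pos (x := 1 - l) (by linarith)
  unfold phi; linarith

lemma phi_hasSum {l : ℝ} (hl : |l| < 1) :
    HasSum (fun n : ℕ => l ^ (n + 2) / (n + 2)) (phi l) := by
  have h := Real.hasSum_pow_div_log_of_abs_lt_one hl
  have h2 := (hasSum_nat_add_iff' 1).2 h
  simp only [Finset.range_one, Finset.sum_singleton] at h2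
  have heq : (fun n : ℕ => l ^ (n + 1 + 1) / (↑(n + 1) + 1)) =
      (fun n : ℕ => l ^ (n + 2) / (↑n + 2)) := by
    funext n; push_cast; ring_nf
  rw [heq] at h2
  convert h2 using 1
  · rfl
  unfold phi
  push_cast
  ring_nf

lemma key_pointwise {l x : ℝ} (h0 : 0 ≤ l) (h1 : l < 1) (hx : |x| ≤ 1) :
    Real.exp (l * x - phi l * x ^ 2) ≤ 1 + l * x := by
  set u := l * x with hu
  have habs : |u| ≤ l := by
    rw [hu, abs_mul, abs_of_nonneg h0]
    calc l * |x| ≤ l * 1 := by nlinarith [abs_nonneg x]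
    _ = l := by ring
  have hu1 : |u| < 1 := lt_of_le_of_lt habs h1
  have hpos : 0 < 1 + u := by
    rcases abs_lt.1 hu1 with ⟨h, _⟩; linarith
  have hsum1 : HasSum (fun n : ℕ => (-u) ^ (n + 2) / (n + 2)) (phi (-u)) :=
    phi_hasSum (by rwa [abs_neg])
  have hsum2 : HasSum (fun n : ℕ => l ^ (n + 2) / (n + 2)) (phi l) :=
    phi_hasSum (by rwa [abs_of_nonneg h0])
  have hsum3 : HasSum (fun n : ℕ => x ^ 2 * (l ^ (n + 2) / (n + 2))) (x ^ 2 * phi l) :=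
    hsum2.mul_left _
  have hterm : ∀ n : ℕ, (-u) ^ (n + 2) / (n + 2) ≤ x ^ 2 * (l ^ (n + 2) / (n + 2)) := by
    intro n
    have hnum : (-u) ^ (n + 2) ≤ x ^ 2 * l ^ (n + 2) := by
      have e1 : (-u) ^ (n + 2) ≤ |u| ^ (n + 2) := by
        calc (-u) ^ (n + 2) ≤ |(-u) ^ (n + 2)| := le_abs_self _
        _ = |u| ^ (n + 2) := by rw [abs_pow, abs_neg]
      have e2 : |u| ^ (n + 2) = |x| ^ (n + 2) * l ^ (n + 2) := by
        rw [hu, abs_mul, mul_pow, abs_of_nonneg h0]; ring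
      have e3 : |x| ^ (n + 2) ≤ |x| ^ 2 :=
        pow_le_pow_of_le_one (abs_nonneg x) hx (by omega)
      have e4 : |x| ^ 2 = x ^ 2 := sq_abs x
      have e5 : |x| ^ (n + 2) * l ^ (n + 2) ≤ x ^ 2 * l ^ (n + 2) := by
        rw [← e4]
        exact mul_le_mul_of_nonneg_right e3 (pow_nonneg h0 _)
      linarith [e1, e2 ▸ e1, e5, e2.le]
    have hd : (0:ℝ) < (n:ℝ) + 2 := by positivity
    calc (-u) ^ (n + 2) / ((n:ℝ) + 2) ≤ (x ^ 2 * l ^ (n + 2)) / ((n:ℝ) + 2) :=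
          div_le_div_of_nonneg_right hnum hd.le |>.trans_eq rfl
    _ = x ^ 2 * (l ^ (n + 2) / ((n:ℝ) + 2)) := by ring
  have hle : phi (-u) ≤ x ^ 2 * phi l := hasSum_le hterm hsum1 hsum3
  have hphiu : phi (-u) = u - Real.log (1 + u) := by
    unfold phi; rw [neg_neg, sub_neg_eq_add]
  rw [hphiu] at hle
  have : l * x - phi l * x ^ 2 ≤ Real.log (1 + u) := by
    rw [← hu]; nlinarith
  calc Real.exp (l * x - phi l * x ^ 2) ≤ Real.exp (Real.log (1 + u)) := Real.exp_le_exp.2 this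
  _ = 1 + u := Real.exp_log hpos

lemma phi_mul_le {c l : ℝ} (hc0 : 0 ≤ c) (hc1 : c ≤ 1) (h0 : 0 ≤ l) (h1 : l < 1) :
    phi (c * l) ≤ c * phi l := by
  have hcon := strictConcaveOn_log_Ioi.concaveOn
  have h := hcon.2 (x := 1 - l) (y := 1) (by simp; linarith)
    (by simp : (1:ℝ) ∈ Set.Ioi (0:ℝ)) hc0 (by linarith : 0 ≤ 1 - c) (by ring)
  simp only [smul_eq_mul, Real.log_one, mul_one] at h
  have heq : c * (1 - l) + (1 - c) = 1 - c * l := by ring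
  rw [heq] at h
  unfold phi
  nlinarith


noncomputable def T (b u : ℝ) : ℝ := Real.exp (b - b / u)

lemma measurable_T (b : ℝ) : Measurable (T b) :=
  (measurable_const.sub (measurable_const.div measurable_id)).exp

lemma T_mem {b u : ℝ} (hb : 0 < b) (hu : u ∈ Ioo (0:ℝ) 1) : T b u ∈ Ioo (0:ℝ) 1 := by
  obtain ⟨h0, h1⟩ := hu
  constructor
  · exact Real.exp_pos _
  · have : b < b / u := by
      rw [lt_div_iff₀ h0]; nlinarith
    have : b - b / u < 0 := by linarith
    calc T b u < Real.exp 0 := Real.exp_lt_exp.2 this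
    _ = 1 := Real.exp_zero

lemma integrand_measurable {b Z S : ℝ} :
    Measurable fun u => Real.exp (T b u * Z - phi (T b u) * S) := by
  have hT := measurable_T b
  have hphi : Measurable fun u => phi (T b u) :=
    (hT.neg.sub ((measurable_const.sub hT).log))
  exact ((hT.mul_const Z).sub (hphi.mul_const S)).exp

lemma integrand_integrableOn {b Z S : ℝ} (hb : 0 < b) (hZ : 0 ≤ Z) (hS : 0 ≤ S) :
    IntegrableOn (fun u => Real.exp (T b u * Z - phi (T b u) * S)) (Ioo (0:ℝ) 1) := by
  refine Integrable.mono' (integrable_const (Real.exp Z)) integrand_measurable.aestronglyMeasurable.restrict ?_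
  filter_upwards [ae_restrict_mem measurableSet_Ioo] with u hu
  obtain ⟨hT0, hT1⟩ := T_mem hb hu
  rw [Real.norm_eq_abs, abs_of_pos (Real.exp_pos _)]
  apply Real.exp_le_exp.2
  have h1 : T b u * Z ≤ Z := by nlinarith
  have h2 : 0 ≤ phi (T b u) * S := mul_nonneg (phi_nonneg hT1) hS
  linarith

lemma lam_bound {α Y lam : ℝ} (hα0 : 0 < α) (hα1 : α ≤ 1) (hY : 0 < Y)
    (hl : α * (Y / (1 + Y)) ≤ lam) (hu : lam ≤ Y / (1 + Y)) :
    α * (Y - Real.log (1 + Y)) ≤ lam * Y - phi lam := by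
  set ls := Y / (1 + Y) with hls
  have hls0 : 0 < ls := div_pos hY (by linarith)
  have hls1 : ls < 1 := by
    rw [hls, div_lt_one (by linarith)]; linarith
  set c := lam / ls with hc
  have hc1 : c ≤ 1 := by
    rw [hc, div_le_one hls0]; exact hu
  have hcα : α ≤ c := by
    rw [hc, le_div_iff₀ hls0]; linarith [hl]
  have hc0 : 0 ≤ c := le_trans hα0.le hcα
  have hlam : lam = c * ls := by
    rw [hc, div_mul_cancel₀]; exact ne_of_gt hls0
  have hphile : phi lam ≤ c * phi ls := by
    rw [hlam]; exact phi_mul_le hc0 hc1 hls0.le hls1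
  have hpsi : ls * Y - phi ls = Y - Real.log (1 + Y) := by
    have h1Y : (0:ℝ) < 1 + Y := by linarith
    have hsub : 1 - ls = (1 + Y)⁻¹ := by
      rw [hls]; field_simp; ring
    unfold phi
    rw [hsub, Real.log_inv]
    rw [hls]; field_simp; ring
  have hpsi_nonneg : 0 ≤ Y - Real.log (1 + Y) := by
    have := Real.log_le_sub_one_of_pos (x := 1 + Y) (by linarith)
    linarith
  have hmain : c * (ls * Y - phi ls) ≤ lam * Y - phi lam := by
    rw [hlam] at hphile ⊢; nlinarith
  rw [hpsi] at hmain
  nlinarith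

lemma core_bound {α δ b Z S : ℝ} (hα : α ∈ Ioo (0:ℝ) 1) (hδ : δ ∈ Ioo (0:ℝ) 1) (hb : 0 < b)
    (hS : 0 < S) (hZ : Real.sqrt (2 * S / α) < Z)
    (hM : (∫ u in Ioo (0:ℝ) 1, Real.exp (T b u * Z - phi (T b u) * S)) < 2 / δ) :
    Z / S - Real.log (1 + Z / S) ≤
      1 / (α * S) * Real.log ((b + Real.log (1 / α) + Real.log (1 + Real.sqrt (α * S / 2))) ^ 2
        / (0.5 * b * Real.log (1 / α)) / δ) := by
  obtain ⟨hα0, hα1⟩ := hα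
  obtain ⟨hδ0, hδ1⟩ := hδ
  set a := Real.log (1 / α) with ha_def
  have ha : 0 < a := Real.log_pos (by rw [lt_div_iff₀ hα0]; linarith)
  have hZ0 : 0 < Z := lt_of_le_of_lt (Real.sqrt_nonneg _) hZ
  set Y := Z / S with hY_def
  have hY : 0 < Y := div_pos hZ0 hS
  set v := Real.log (1 + 1 / Y) with hv_def
  have hv : 0 < v := Real.log_pos (by simp; positivity)
  set u₂ := b / (b + v) with hu2_def
  set u₁ := b / (a + b + v) with hu1_def
  have hu₁0 : 0 < u₁ := div_pos hb (by linarith)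
  have hu₁₂ : u₁ < u₂ := by
    apply div_lt_div_of_pos_left hb (by linarith) (by linarith)
  have hu₂1 : u₂ < 1 := by
    rw [hu2_def, div_lt_one (by linarith)]; linarith
  -- T values on [u₁, u₂]
  set ls := Y / (1 + Y) with hls_def
  have hexp_v : Real.exp (-v) = ls := by
    rw [hv_def, ← Real.log_inv, Real.exp_log (by positivity)]
    rw [hls_def]
    rw [inv_eq_one_div]
    rw [div_eq_div_iff (by positivity) (by positivity)]
    field_simp
    ring
  have hexp_a : Real.exp (-a) = α := by
    have hinv : ((1:ℝ) / α)⁻¹ = α := by field_simp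
    rw [ha_def, ← Real.log_inv, hinv, Real.exp_log hα0]
  have hTbound : ∀ u ∈ Icc u₁ u₂, α * ls ≤ T b u ∧ T b u ≤ ls := by
    intro u ⟨h1, h2⟩
    have hu0 : 0 < u := lt_of_lt_of_le hu₁0 h1
    have hb1 : b / u ≤ b / u₁ := div_le_div_of_nonneg_left hb.le hu₁0 h1
    have hb2 : b / u₂ ≤ b / u := div_le_div_of_nonneg_left hb.le hu0 h2
    have e1 : b / u₁ = a + b + v := by
      rw [hu1_def]; field_simp
    have e2 : b / u₂ = b + v := by
      rw [hu2_def]; field_simp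
    constructor
    · have : -(a + v) ≤ b - b / u := by rw [e1] at hb1; linarith
      calc α * ls = Real.exp (-a) * Real.exp (-v) := by rw [hexp_a, hexp_v]
      _ = Real.exp (-(a + v)) := by rw [← Real.exp_add]; ring_nf
      _ ≤ T b u := Real.exp_le_exp.2 this
    · have : b - b / u ≤ -v := by rw [e2] at hb2; linarith
      calc T b u ≤ Real.exp (-v) := Real.exp_le_exp.2 this
      _ = ls := hexp_v
  -- lower bound for the integral
  set E0 := Real.exp (α * S * (Y - Real.log (1 + Y))) with hE0_def
  have hIcc_sub : Icc u₁ u₂ ⊆ Ioo (0:ℝ) 1 := fun u hu =>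
    ⟨lt_of_lt_of_le hu₁0 hu.1, lt_of_le_of_lt hu.2 hu₂1⟩
  have hint : IntegrableOn (fun u => Real.exp (T b u * Z - phi (T b u) * S)) (Ioo (0:ℝ) 1) :=
    integrand_integrableOn hb hZ0.le hS.le
  have hlow : ∀ u ∈ Icc u₁ u₂, E0 ≤ Real.exp (T b u * Z - phi (T b u) * S) := by
    intro u hu
    obtain ⟨hl, hr⟩ := hTbound u hu
    apply Real.exp_le_exp.2
    have hlam := lam_bound hα0 hα1.le hY hl hr
    have hZeq : Z = Y * S := by rw [hY_def]; field_simp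
    calc α * S * (Y - Real.log (1 + Y)) ≤ (T b u * Y - phi (T b u)) * S := by nlinarith
    _ = T b u * Z - phi (T b u) * S := by rw [hZeq]; ring
  have step1 : E0 * (u₂ - u₁) ≤ ∫ u in Icc u₁ u₂, Real.exp (T b u * Z - phi (T b u) * S) := by
    have := setIntegral_ge_of_const_le (μ := volume) measurableSet_Icc
      measure_Icc_lt_top.ne hlow (hint.mono_set hIcc_sub)
    rwa [Real.volume_real_Icc_of_le (by linarith), smul_eq_mul, mul_comm] at this
  have step2 : (∫ u in Icc u₁ u₂, Real.exp (T b u * Z - phi (T b u) * S)) ≤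
      ∫ u in Ioo (0:ℝ) 1, Real.exp (T b u * Z - phi (T b u) * S) := by
    apply setIntegral_mono_set hint
    · filter_upwards with u using (Real.exp_pos _).le
    · exact HasSubset.Subset.eventuallyLE hIcc_sub
  have hchain : E0 * (u₂ - u₁) < 2 / δ := lt_of_le_of_lt (le_trans step1 step2) hM
  -- u₂ - u₁ = a*b/((b+v)*(a+b+v))
  have hw : u₂ - u₁ = a * b / ((b + v) * (a + b + v)) := by
    rw [hu2_def, hu1_def]; field_simp; ring
  set L := Real.log (1 + Real.sqrt (α * S / 2)) with hL_def
  have hL0 : 0 ≤ L := Real.log_nonneg (by nlinarith [Real.sqrt_nonneg (α * S / 2)])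
  have hvL : v ≤ L := by
    have hZ2 : 2 * S / α < Z ^ 2 := by
      have h := Real.sq_sqrt (show (0:ℝ) ≤ 2 * S / α by positivity)
      nlinarith [Real.sqrt_nonneg (2 * S / α)]
    have hSZ : S / Z < Real.sqrt (α * S / 2) := by
      rw [← Real.sqrt_sq (by positivity : (0:ℝ) ≤ S / Z)]
      apply Real.sqrt_lt_sqrt (by positivity)
      rw [div_pow]
      rw [div_lt_iff₀ (by positivity)]
      have : α * S / 2 * Z ^ 2 > α * S / 2 * (2 * S / α) := by
        apply mul_lt_mul_of_pos_left hZ2 (by positivity)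
      calc S ^ 2 = α * S / 2 * (2 * S / α) := by field_simp
      _ < α * S / 2 * Z ^ 2 := this
    have h1Y : 1 / Y = S / Z := by rw [hY_def]; field_simp
    rw [hv_def, hL_def, h1Y]
    apply Real.log_le_log (by positivity)
    linarith
  -- final chain
  have hww : 0 < u₂ - u₁ := by linarith
  have hE0bound : E0 < 2 / δ / (u₂ - u₁) := by
    rw [lt_div_iff₀ hww]; linarith
  have hrhs : 2 / δ / (u₂ - u₁) ≤ (b + a + L) ^ 2 / (0.5 * b * a) / δ := by
    rw [hw]
    have e : 2 / δ / (a * b / ((b + v) * (a + b + v))) = 2 * ((b + v) * (a + b + v)) / (a * b * δ) := by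
      field_simp
    have e2 : (b + a + L) ^ 2 / (0.5 * b * a) / δ = 2 * (b + a + L) ^ 2 / (a * b * δ) := by
      rw [div_div]
      rw [div_eq_div_iff (by positivity) (by positivity)]
      ring
    rw [e, e2]
    have hnum : 2 * ((b + v) * (a + b + v)) ≤ 2 * (b + a + L) ^ 2 := by nlinarith
    have hden : (0:ℝ) ≤ a * b * δ := by
      have := mul_pos (mul_pos ha hb) hδ0
      linarith
    exact div_le_div_of_nonneg_right hnum hden
  have hRpos : (0:ℝ) < (b + a + L) ^ 2 / (0.5 * b * a) / δ := by positivity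
  have hlt : E0 < (b + a + L) ^ 2 / (0.5 * b * a) / δ := lt_of_lt_of_le hE0bound hrhs
  have hlog := Real.log_lt_log (Real.exp_pos (α * S * (Y - Real.log (1 + Y)))) (hE0_def ▸ hlt)
  rw [Real.log_exp] at hlog
  have hαS : 0 < α * S := by positivity
  rw [one_div, inv_mul_eq_div, le_div_iff₀ hαS]
  nlinarith


lemma ville {Ω : Type*} {m0 : MeasurableSpace Ω} {μ : Measure Ω} [IsProbabilityMeasure μ]
    {𝒢 : Filtration ℕ m0} {f : ℕ → Ω → ℝ} (hsup : Supermartingale f 𝒢 μ)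
    (hnonneg : ∀ n ω, 0 ≤ f n ω) {c : ℝ} (hc : 0 < c) :
    μ {ω | ∃ t, c ≤ f t ω} ≤ ENNReal.ofReal ((∫ ω, f 0 ω ∂μ) / c) := by
  set I0 := ∫ ω, f 0 ω ∂μ with hI0
  -- finite-horizon bound
  have hfin : ∀ n : ℕ, μ {ω | c ≤ (range (n + 1)).sup' nonempty_range_add_one fun k => f k ω} ≤
      ENNReal.ofReal (I0 / c) := by
    intro n
    set Sn := {ω | c ≤ (range (n + 1)).sup' nonempty_range_add_one fun k => f k ω} with hSn
    have hmeas : MeasurableSet Sn :=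
      measurableSet_le measurable_const
        (Finset.measurable_range_sup'' fun k _ => (hsup.stronglyMeasurable k).measurable.le (𝒢.le k))
    set τ : Ω → ℕ∞ := fun ω => ((hittingBtwn f {y : ℝ | c ≤ y} 0 n ω : ℕ) : ℕ∞) with hτdef
    have hτ : IsStoppingTime 𝒢 τ :=
      hsup.stronglyAdapted.adapted.isStoppingTime_hittingBtwn measurableSet_Ici
    have hτle : ∀ ω, τ ω ≤ n := fun ω => by simp only [hτdef]; exact_mod_cast (hittingBtwn_le (u := f) (s := {y : ℝ | c ≤ y}) (n := 0) ω : hittingBtwn f {y : ℝ | c ≤ y} 0 n ω ≤ n)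
    have hτint : Integrable (stoppedValue f τ) μ :=
      integrable_stoppedValue ℕ hτ hsup.integrable hτle
    have hmem : ∀ ω ∈ Sn, c ≤ stoppedValue f τ ω := by
      intro ω hω
      rw [hSn, Set.mem_setOf_eq, Finset.le_sup'_iff] at hω
      obtain ⟨j, hj1, hj2⟩ := hω
      refine stoppedValue_hittingBtwn_mem ?_
      exact ⟨j, ⟨Nat.zero_le _, Nat.lt_succ_iff.1 (Finset.mem_range.1 hj1)⟩, hj2⟩
    have key1 : c * (μ Sn).toReal ≤ ∫ ω in Sn, stoppedValue f τ ω ∂μ :=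
      setIntegral_ge_of_const_le_real hmeas (measure_ne_top μ _) hmem hτint.integrableOn
    have key2 : (∫ ω in Sn, stoppedValue f τ ω ∂μ) ≤ ∫ ω, stoppedValue f τ ω ∂μ :=
      setIntegral_le_integral hτint (Filter.Eventually.of_forall fun ω => hnonneg _ _)
    have key3 : (∫ ω, stoppedValue f τ ω ∂μ) ≤ I0 := by
      have hneg := hsup.neg
      have h := hneg.expected_stoppedValue_mono (isStoppingTime_const 𝒢 0) hτ
        (fun ω => WithTop.coe_le_coe.2 (Nat.zero_le _)) (N := n) hτle
      have e1 : (∫ x, stoppedValue (-f) (fun _ => WithTop.some (0 : ℕ)) x ∂μ) = -I0 := by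
        simp only [stoppedValue_const, Pi.neg_apply, hI0]
        rw [integral_neg]
      have e2 : (∫ x, stoppedValue (-f) τ x ∂μ) = -∫ x, stoppedValue f τ x ∂μ := by
        simp only [stoppedValue, Pi.neg_apply]
        rw [integral_neg]
      rw [e1, e2] at h
      linarith
    have : c * (μ Sn).toReal ≤ I0 := le_trans key1 (le_trans key2 key3)
    have htoReal : (μ Sn).toReal ≤ I0 / c := by
      rw [le_div_iff₀ hc]; linarith
    calc μ Sn = ENNReal.ofReal ((μ Sn).toReal) := (ENNReal.ofReal_toReal (measure_ne_top μ _)).symm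
    _ ≤ ENNReal.ofReal (I0 / c) := ENNReal.ofReal_le_ofReal htoReal
  -- union over horizons
  have hunion : {ω | ∃ t, c ≤ f t ω} =
      ⋃ n, {ω | c ≤ (range (n + 1)).sup' nonempty_range_add_one fun k => f k ω} := by
    ext ω
    simp only [Set.mem_setOf_eq, Set.mem_iUnion]
    constructor
    · rintro ⟨t, ht⟩
      exact ⟨t, (Finset.le_sup'_iff _).2 ⟨t, Finset.mem_range.2 (Nat.lt_succ_self t), ht⟩⟩
    · rintro ⟨n, hn⟩
      obtain ⟨j, _, hj⟩ := (Finset.le_sup'_iff _).1 hn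
      exact ⟨j, hj⟩
  rw [hunion]
  rw [Directed.measure_iUnion]
  · exact iSup_le hfin
  · apply Monotone.directed_le
    intro m n hmn ω hω
    simp only [Set.mem_setOf_eq] at hω ⊢
    obtain ⟨j, hj1, hj2⟩ := (Finset.le_sup'_iff _).1 hω
    exact (Finset.le_sup'_iff _).2 ⟨j, Finset.mem_range.2 (lt_of_lt_of_le (Finset.mem_range.1 hj1) (by omega)), hj2⟩



variable {Ω : Type*} {m0 : MeasurableSpace Ω}

def Zp (g : ℕ → Ω → ℝ) (σ : ℝ) (t : ℕ) (ω : Ω) : ℝ := σ * ∑ i ∈ Finset.range t, g (i + 1) ω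

def Sp (g : ℕ → Ω → ℝ) (t : ℕ) (ω : Ω) : ℝ := ∑ i ∈ Finset.range t, (g (i + 1) ω) ^ 2

noncomputable def Mp (g : ℕ → Ω → ℝ) (b σ : ℝ) (t : ℕ) (ω : Ω) : ℝ :=
  ∫ u in Ioo (0:ℝ) 1, Real.exp (T b u * Zp g σ t ω - phi (T b u) * Sp g t ω)

lemma Zp_succ (g : ℕ → Ω → ℝ) (σ : ℝ) (t : ℕ) (ω : Ω) :
    Zp g σ (t + 1) ω = Zp g σ t ω + σ * g (t + 1) ω := by
  simp only [Zp, Finset.sum_range_succ]; ring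

lemma Sp_succ (g : ℕ → Ω → ℝ) (t : ℕ) (ω : Ω) :
    Sp g (t + 1) ω = Sp g t ω + (g (t + 1) ω) ^ 2 := by
  simp only [Sp, Finset.sum_range_succ]

section Meas

variable (ℱ : Filtration ℕ m0)

lemma Zp_SM {g : ℕ → Ω → ℝ} (hg : ∀ t, StronglyMeasurable[ℱ (t + 1)] (g (t + 1)))
    (σ : ℝ) (t : ℕ) : StronglyMeasurable[ℱ t] (Zp g σ t) := by
  apply StronglyMeasurable.const_mul
  apply Finset.stronglyMeasurable_fun_sum
  intro i hi
  exact (hg i).mono (ℱ.mono (Finset.mem_range.1 hi))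

lemma Sp_SM {g : ℕ → Ω → ℝ} (hg : ∀ t, StronglyMeasurable[ℱ (t + 1)] (g (t + 1)))
    (t : ℕ) : StronglyMeasurable[ℱ t] (Sp g t) := by
  apply Finset.stronglyMeasurable_fun_sum
  intro i hi
  exact ((hg i).mono (ℱ.mono (Finset.mem_range.1 hi))).pow 2

lemma Mp_SM {g : ℕ → Ω → ℝ} (hg : ∀ t, StronglyMeasurable[ℱ (t + 1)] (g (t + 1)))
    (b σ : ℝ) (t : ℕ) : StronglyMeasurable[ℱ t] (Mp g b σ t) := by
  have hz := Zp_SM ℱ hg σ t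
  have hs := Sp_SM ℱ hg t
  letI : MeasurableSpace Ω := ℱ t
  exact StronglyMeasurable.integral_prod_right'
    (f := fun p : Ω × ℝ => Real.exp (T b p.2 * Zp g σ t p.1 - phi (T b p.2) * Sp g t p.1))
    (Measurable.stronglyMeasurable
      ((((measurable_T b).comp measurable_snd).mul (hz.measurable.comp measurable_fst)).sub
        ((((measurable_T b).neg.sub ((measurable_const.sub (measurable_T b)).log)).comp
          measurable_snd).mul (hs.measurable.comp measurable_fst))).exp)

end Meas

lemma Zp_abs_le {g : ℕ → Ω → ℝ} (hg : ∀ t ω, |g (t + 1) ω| ≤ 1) {σ : ℝ} (hσ : |σ| = 1)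
    (t : ℕ) (ω : Ω) : |Zp g σ t ω| ≤ t := by
  rw [Zp, abs_mul, hσ, one_mul]
  calc |∑ i ∈ Finset.range t, g (i + 1) ω| ≤ ∑ i ∈ Finset.range t, |g (i + 1) ω| :=
        Finset.abs_sum_le_sum_abs _ _
  _ ≤ ∑ _i ∈ Finset.range t, (1:ℝ) := Finset.sum_le_sum fun i _ => hg i ω
  _ = t := by simp

lemma Sp_nonneg (g : ℕ → Ω → ℝ) (t : ℕ) (ω : Ω) : 0 ≤ Sp g t ω :=
  Finset.sum_nonneg fun i _ => sq_nonneg _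

lemma integrand_le {b z s : ℝ} (hb : 0 < b) {u : ℝ} (hu : u ∈ Ioo (0:ℝ) 1) (hs : 0 ≤ s) :
    Real.exp (T b u * z - phi (T b u) * s) ≤ Real.exp |z| := by
  obtain ⟨hT0, hT1⟩ := T_mem hb hu
  apply Real.exp_le_exp.2
  have h1 : T b u * z ≤ |z| := by
    calc T b u * z ≤ |T b u * z| := le_abs_self _
    _ = T b u * |z| := by rw [abs_mul, abs_of_pos hT0]
    _ ≤ 1 * |z| := mul_le_mul_of_nonneg_right hT1.le (abs_nonneg _)
    _ = |z| := one_mul _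
  have h2 : 0 ≤ phi (T b u) * s := mul_nonneg (phi_nonneg hT1) hs
  linarith

lemma Mp_nonneg (g : ℕ → Ω → ℝ) (b σ : ℝ) (t : ℕ) (ω : Ω) : 0 ≤ Mp g b σ t ω :=
  setIntegral_nonneg measurableSet_Ioo fun _ _ => (Real.exp_pos _).le

lemma integrand_integrableOn' {b z s : ℝ} (hb : 0 < b) (hs : 0 ≤ s) :
    IntegrableOn (fun u => Real.exp (T b u * z - phi (T b u) * s)) (Ioo (0:ℝ) 1) := by
  have hmeas : Measurable fun u => Real.exp (T b u * z - phi (T b u) * s) :=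
    ((((measurable_T b).mul_const z)).sub
      (((measurable_T b).neg.sub ((measurable_const.sub (measurable_T b)).log)).mul_const s)).exp
  refine Integrable.mono' (integrable_const (Real.exp |z|)) hmeas.aestronglyMeasurable.restrict ?_
  filter_upwards [ae_restrict_mem measurableSet_Ioo] with u hu
  rw [Real.norm_eq_abs, abs_of_pos (Real.exp_pos _)]
  exact integrand_le hb hu hs

lemma Mp_le {g : ℕ → Ω → ℝ} (hg : ∀ t ω, |g (t + 1) ω| ≤ 1) {b σ : ℝ} (hb : 0 < b)
    (hσ : |σ| = 1) (t : ℕ) (ω : Ω) : Mp g b σ t ω ≤ Real.exp t := by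
  have hZ := Zp_abs_le hg hσ t ω
  have hS := Sp_nonneg g t ω
  calc Mp g b σ t ω ≤ ∫ _u in Ioo (0:ℝ) 1, Real.exp t := by
        apply setIntegral_mono_on (integrand_integrableOn' hb hS)
          (integrableOn_const (by simp)) measurableSet_Ioo
        intro u hu
        calc Real.exp (T b u * Zp g σ t ω - phi (T b u) * Sp g t ω) ≤ Real.exp |Zp g σ t ω| :=
              integrand_le hb hu hS
        _ ≤ Real.exp t := Real.exp_le_exp.2 hZ
  _ = Real.exp t := by
        rw [setIntegral_const, Real.volume_real_Ioo, smul_eq_mul]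
        norm_num

lemma Mp_zero (g : ℕ → Ω → ℝ) (b σ : ℝ) (ω : Ω) : Mp g b σ 0 ω = 1 := by
  have : ∀ u : ℝ, Real.exp (T b u * Zp g σ 0 ω - phi (T b u) * Sp g 0 ω) = 1 := by
    intro u; simp [Zp, Sp]
  simp only [Mp, this]
  rw [setIntegral_const, Real.volume_real_Ioo, smul_eq_mul]
  norm_num

variable {μ : Measure Ω} [IsProbabilityMeasure μ]

lemma step_lam (ℱ : Filtration ℕ m0) {g : ℕ → Ω → ℝ}
    (hgadapted : ∀ t, StronglyMeasurable[ℱ (t + 1)] (g (t + 1)))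
    (hgbdd : ∀ t ω, |g (t + 1) ω| ≤ 1)
    (hmds : ∀ t, μ[g (t + 1)|ℱ t] =ᵐ[μ] 0)
    {σ : ℝ} (hσ : |σ| = 1) (t : ℕ) {lam : ℝ} (hlam : lam ∈ Ioo (0:ℝ) 1)
    {A : Set Ω} (hA : MeasurableSet[ℱ t] A) :
    (∫ ω in A, Real.exp (lam * Zp g σ (t + 1) ω - phi lam * Sp g (t + 1) ω) ∂μ) ≤
      ∫ ω in A, Real.exp (lam * Zp g σ t ω - phi lam * Sp g t ω) ∂μ := by
  obtain ⟨hlam0, hlam1⟩ := hlam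
  have hA' : MeasurableSet A := ℱ.le t A hA
  set X := fun ω => Real.exp (lam * Zp g σ t ω - phi lam * Sp g t ω) with hX_def
  set Y := fun ω => Real.exp (lam * (σ * g (t + 1) ω) - phi lam * (σ * g (t + 1) ω) ^ 2)
    with hY_def
  have hσsq : σ ^ 2 = 1 := by
    have : |σ| ^ 2 = 1 := by rw [hσ]; norm_num
    rwa [sq_abs] at this
  have hXY : ∀ ω, Real.exp (lam * Zp g σ (t + 1) ω - phi lam * Sp g (t + 1) ω) = X ω * Y ω := by
    intro ω
    rw [hX_def, hY_def, ← Real.exp_add]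
    congr 1
    rw [Zp_succ, Sp_succ]
    have : (σ * g (t + 1) ω) ^ 2 = (g (t + 1) ω) ^ 2 := by
      rw [mul_pow, hσsq, one_mul]
    rw [this]; ring
  -- basic bounds
  have hXpos : ∀ ω, 0 < X ω := fun ω => Real.exp_pos _
  have hXle : ∀ ω, X ω ≤ Real.exp t := by
    intro ω
    apply Real.exp_le_exp.2
    have h1 : lam * Zp g σ t ω ≤ |Zp g σ t ω| := by
      calc lam * Zp g σ t ω ≤ |lam * Zp g σ t ω| := le_abs_self _
      _ = lam * |Zp g σ t ω| := by rw [abs_mul, abs_of_pos hlam0]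
      _ ≤ 1 * |Zp g σ t ω| := mul_le_mul_of_nonneg_right hlam1.le (abs_nonneg _)
      _ = |Zp g σ t ω| := one_mul _
    have h2 : 0 ≤ phi lam * Sp g t ω := mul_nonneg (phi_nonneg hlam1) (Sp_nonneg g t ω)
    have h3 := Zp_abs_le hgbdd hσ t ω
    linarith
  have hYle : ∀ ω, Y ω ≤ 1 + lam * (σ * g (t + 1) ω) := by
    intro ω
    apply key_pointwise hlam0.le hlam1
    rw [abs_mul, hσ, one_mul]
    exact hgbdd t ω
  -- measurability
  have hZt := Zp_SM ℱ hgadapted σ t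
  have hSt := Sp_SM ℱ hgadapted t
  have hX_SM : StronglyMeasurable[ℱ t] X :=
    (((hZt.measurable.const_mul lam).sub (hSt.measurable.const_mul (phi lam))).exp).stronglyMeasurable
  have hX_meas : Measurable X := (hX_SM.mono (ℱ.le t)).measurable
  have hg_meas : Measurable (g (t + 1)) := ((hgadapted t).mono (ℱ.le (t + 1))).measurable
  have hg_bdd1 : ∀ ω, |g (t + 1) ω| ≤ 1 := hgbdd t
  -- integrabilities
  have hXY_int : IntegrableOn (fun ω => X ω * Y ω) A μ := by
    have hmeas : Measurable fun ω => X ω * Y ω := by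
      apply hX_meas.mul
      exact (((hg_meas.const_mul σ).const_mul lam).sub
        (((hg_meas.const_mul σ).pow_const 2).const_mul (phi lam))).exp
    refine Integrable.mono' (integrable_const (Real.exp t * Real.exp 2))
      hmeas.aestronglyMeasurable.restrict ?_
    filter_upwards with ω
    rw [Real.norm_eq_abs, abs_of_pos (mul_pos (hXpos ω) (Real.exp_pos _))]
    have hYle2 : Y ω ≤ Real.exp 2 := by
      rw [hY_def]
      apply Real.exp_le_exp.2
      have e1 : lam * (σ * g (t + 1) ω) ≤ 1 * 1 := by
        have : |lam * (σ * g (t + 1) ω)| ≤ 1 := by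
          rw [abs_mul, abs_mul, hσ, one_mul, abs_of_pos hlam0]
          calc lam * |g (t + 1) ω| ≤ 1 * 1 := by
                apply mul_le_mul hlam1.le (hg_bdd1 ω) (abs_nonneg _) zero_le_one
          _ = 1 := by norm_num
        calc lam * (σ * g (t + 1) ω) ≤ |lam * (σ * g (t + 1) ω)| := le_abs_self _
        _ ≤ 1 := this
        _ = 1 * 1 := by norm_num
      have e2 : 0 ≤ phi lam * (σ * g (t + 1) ω) ^ 2 :=
        mul_nonneg (phi_nonneg hlam1) (sq_nonneg _)
      linarith
    exact mul_le_mul (hXle ω) hYle2 (Real.exp_pos _).le (Real.exp_pos _).le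
  have hX1_int : IntegrableOn (fun ω => X ω * (1 + lam * (σ * g (t + 1) ω))) A μ := by
    have hmeas : Measurable fun ω => X ω * (1 + lam * (σ * g (t + 1) ω)) :=
      hX_meas.mul (measurable_const.add ((hg_meas.const_mul σ).const_mul lam))
    refine Integrable.mono' (integrable_const (Real.exp t * 2))
      hmeas.aestronglyMeasurable.restrict ?_
    filter_upwards with ω
    rw [Real.norm_eq_abs, abs_mul]
    have h1 : |X ω| ≤ Real.exp t := by rw [abs_of_pos (hXpos ω)]; exact hXle ω
    have h2 : |1 + lam * (σ * g (t + 1) ω)| ≤ 2 := by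
      have : |lam * (σ * g (t + 1) ω)| ≤ 1 := by
        rw [abs_mul, abs_mul, hσ, one_mul, abs_of_pos hlam0]
        calc lam * |g (t + 1) ω| ≤ 1 * 1 :=
              mul_le_mul hlam1.le (hg_bdd1 ω) (abs_nonneg _) zero_le_one
        _ = 1 := by norm_num
      have := abs_add_le (1:ℝ) (lam * (σ * g (t + 1) ω))
      simp only [abs_one] at this
      linarith
    exact mul_le_mul h1 h2 (abs_nonneg _) (Real.exp_pos _).le
  have hX_int : IntegrableOn X A μ := by
    refine Integrable.mono' (integrable_const (Real.exp t))
      hX_meas.aestronglyMeasurable.restrict ?_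
    filter_upwards with ω
    rw [Real.norm_eq_abs, abs_of_pos (hXpos ω)]; exact hXle ω
  have hXg_int : IntegrableOn (fun ω => X ω * g (t + 1) ω) A μ := by
    have hmeas : Measurable fun ω => X ω * g (t + 1) ω := hX_meas.mul hg_meas
    refine Integrable.mono' (integrable_const (Real.exp t))
      hmeas.aestronglyMeasurable.restrict ?_
    filter_upwards with ω
    rw [Real.norm_eq_abs, abs_mul]
    have hstep : |X ω| * |g (t + 1) ω| ≤ Real.exp t * 1 := by
      apply mul_le_mul ?_ (hg_bdd1 ω) (abs_nonneg _) (Real.exp_pos _).le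
      rw [abs_of_pos (hXpos ω)]; exact hXle ω
    linarith
  -- the zero-mean part
  have hXg_zero : (∫ ω in A, X ω * g (t + 1) ω ∂μ) = 0 := by
    set W := A.indicator X with hW_def
    have hW_SM : StronglyMeasurable[ℱ t] W := hX_SM.indicator hA
    have hW_bdd : ∀ ω, |W ω| ≤ Real.exp t := by
      intro ω
      rw [hW_def]
      by_cases h : ω ∈ A
      · rw [Set.indicator_of_mem h, abs_of_pos (hXpos ω)]; exact hXle ω
      · rw [Set.indicator_of_notMem h, abs_zero]; exact (Real.exp_pos _).le
    have hWg_int : Integrable (W * g (t + 1)) μ := by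
      have hmeas : Measurable (W * g (t + 1)) :=
        (((hW_SM.mono (ℱ.le t)).measurable)).mul hg_meas
      refine Integrable.mono' (integrable_const (Real.exp t))
        hmeas.aestronglyMeasurable ?_
      filter_upwards with ω
      rw [Pi.mul_apply, Real.norm_eq_abs, abs_mul]
      calc |W ω| * |g (t + 1) ω| ≤ Real.exp t * 1 :=
            mul_le_mul (hW_bdd ω) (hg_bdd1 ω) (abs_nonneg _) (Real.exp_pos _).le
      _ = Real.exp t := by norm_num
    have hg_int : Integrable (g (t + 1)) μ := by
      refine Integrable.mono' (integrable_const 1) hg_meas.aestronglyMeasurable ?_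
      filter_upwards with ω
      rw [Real.norm_eq_abs]; exact hg_bdd1 ω
    have hcond := condExp_mul_of_stronglyMeasurable_left hW_SM hWg_int hg_int
    have hcond0 : μ[W * g (t + 1)|ℱ t] =ᵐ[μ] 0 := by
      refine hcond.trans ?_
      filter_upwards [hmds t] with ω hω
      simp only [Pi.mul_apply, hω, Pi.zero_apply, mul_zero]
    have h1 : (∫ ω, (W * g (t + 1)) ω ∂μ) = 0 := by
      rw [← integral_condExp (ℱ.le t) (f := W * g (t + 1))]
      rw [integral_congr_ae hcond0]
      simp
    have h2 : (∫ ω in A, X ω * g (t + 1) ω ∂μ) = ∫ ω, (W * g (t + 1)) ω ∂μ := by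
      rw [← integral_indicator hA']
      congr 1
      funext ω
      rw [Pi.mul_apply, hW_def]
      by_cases h : ω ∈ A
      · rw [Set.indicator_of_mem h, Set.indicator_of_mem h]
      · rw [Set.indicator_of_notMem h, Set.indicator_of_notMem h, zero_mul]
    rw [h2, h1]
  -- chain
  calc (∫ ω in A, Real.exp (lam * Zp g σ (t + 1) ω - phi lam * Sp g (t + 1) ω) ∂μ)
      = ∫ ω in A, X ω * Y ω ∂μ := by
        apply integral_congr_ae
        filter_upwards with ω using hXY ω
  _ ≤ ∫ ω in A, X ω * (1 + lam * (σ * g (t + 1) ω)) ∂μ := by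
        apply setIntegral_mono hXY_int hX1_int
        intro ω
        exact mul_le_mul_of_nonneg_left (hYle ω) (hXpos ω).le
  _ = (∫ ω in A, X ω ∂μ) + (lam * σ) * ∫ ω in A, X ω * g (t + 1) ω ∂μ := by
        rw [← integral_const_mul]
        rw [← integral_add hX_int]
        · congr 1
          funext ω
          ring
        · exact (hXg_int.const_mul _)
  _ = ∫ ω in A, X ω ∂μ := by rw [hXg_zero, mul_zero, add_zero]

lemma prod_integrable (ℱ : Filtration ℕ m0) {g : ℕ → Ω → ℝ}
    (hgadapted : ∀ t, StronglyMeasurable[ℱ (t + 1)] (g (t + 1)))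
    (hgbdd : ∀ t ω, |g (t + 1) ω| ≤ 1)
    {b σ : ℝ} (hb : 0 < b) (hσ : |σ| = 1) (s : ℕ) {A : Set Ω} (hA' : MeasurableSet A) :
    Integrable (Function.uncurry fun ω u =>
        Real.exp (T b u * Zp g σ s ω - phi (T b u) * Sp g s ω))
      ((μ.restrict A).prod (volume.restrict (Ioo (0:ℝ) 1))) := by
  have hz := (Zp_SM ℱ hgadapted σ s).mono (ℱ.le s)
  have hs := (Sp_SM ℱ hgadapted s).mono (ℱ.le s)
  have hmeas : Measurable (Function.uncurry fun ω u =>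
      Real.exp (T b u * Zp g σ s ω - phi (T b u) * Sp g s ω)) := by
    apply Measurable.exp
    exact (((measurable_T b).comp measurable_snd).mul (hz.measurable.comp measurable_fst)).sub
      ((((measurable_T b).neg.sub ((measurable_const.sub (measurable_T b)).log)).comp
        measurable_snd).mul (hs.measurable.comp measurable_fst))
  rw [Measure.prod_restrict]
  haveI : IsFiniteMeasure ((μ.prod volume).restrict (A ×ˢ Ioo (0:ℝ) 1)) := by
    constructor
    rw [Measure.restrict_apply_univ, Measure.prod_prod]
    exact ENNReal.mul_lt_top (measure_lt_top μ A) (by simp [Real.volume_Ioo])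
  refine Integrable.mono' (integrable_const (Real.exp s))
    hmeas.aestronglyMeasurable.restrict ?_
  filter_upwards [ae_restrict_mem (hA'.prod measurableSet_Ioo)] with p hp
  obtain ⟨_, hp2⟩ := hp
  obtain ⟨x, u⟩ := p
  simp only [Function.uncurry_apply_pair]
  rw [Real.norm_eq_abs, abs_of_pos (Real.exp_pos _)]
  calc Real.exp (T b u * Zp g σ s x - phi (T b u) * Sp g s x)
      ≤ Real.exp |Zp g σ s x| := integrand_le hb hp2 (Sp_nonneg g s x)
  _ ≤ Real.exp s := Real.exp_le_exp.2 (Zp_abs_le hgbdd hσ s x)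

lemma Mp_setIntegral_step (ℱ : Filtration ℕ m0) {g : ℕ → Ω → ℝ}
    (hgadapted : ∀ t, StronglyMeasurable[ℱ (t + 1)] (g (t + 1)))
    (hgbdd : ∀ t ω, |g (t + 1) ω| ≤ 1)
    (hmds : ∀ t, μ[g (t + 1)|ℱ t] =ᵐ[μ] 0)
    {b σ : ℝ} (hb : 0 < b) (hσ : |σ| = 1) (t : ℕ)
    {A : Set Ω} (hA : MeasurableSet[ℱ t] A) :
    (∫ ω in A, Mp g b σ (t + 1) ω ∂μ) ≤ ∫ ω in A, Mp g b σ t ω ∂μ := by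
  have hA' : MeasurableSet A := ℱ.le t A hA
  have hprod1 := prod_integrable ℱ hgadapted hgbdd hb hσ (t + 1) (μ := μ) hA'
  have hprod0 := prod_integrable ℱ hgadapted hgbdd hb hσ t (μ := μ) hA'
  have hswap1 := integral_integral_swap hprod1
  have hswap0 := integral_integral_swap hprod0
  calc (∫ ω in A, Mp g b σ (t + 1) ω ∂μ)
      = ∫ u in Ioo (0:ℝ) 1, (∫ ω in A,
          Real.exp (T b u * Zp g σ (t + 1) ω - phi (T b u) * Sp g (t + 1) ω) ∂μ) := hswap1
  _ ≤ ∫ u in Ioo (0:ℝ) 1, (∫ ω in A,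
          Real.exp (T b u * Zp g σ t ω - phi (T b u) * Sp g t ω) ∂μ) := by
        have hm1 := hprod1.integral_prod_right
        have hm0 := hprod0.integral_prod_right
        simp only [Function.uncurry_apply_pair] at hm1 hm0
        apply integral_mono_ae hm1 hm0
        filter_upwards [ae_restrict_mem measurableSet_Ioo] with u hu
        exact step_lam ℱ hgadapted hgbdd hmds hσ t (T_mem hb hu) hA
  _ = ∫ ω in A, Mp g b σ t ω ∂μ := hswap0.symm

lemma Mp_integrable (ℱ : Filtration ℕ m0) {g : ℕ → Ω → ℝ}
    (hgadapted : ∀ t, StronglyMeasurable[ℱ (t + 1)] (g (t + 1)))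
    (hgbdd : ∀ t ω, |g (t + 1) ω| ≤ 1)
    {b σ : ℝ} (hb : 0 < b) (hσ : |σ| = 1) (t : ℕ) : Integrable (Mp g b σ t) μ := by
  refine Integrable.mono' (integrable_const (Real.exp t))
    ((Mp_SM ℱ hgadapted b σ t).mono (ℱ.le t)).aestronglyMeasurable ?_
  filter_upwards with ω
  rw [Real.norm_eq_abs, abs_of_nonneg (Mp_nonneg g b σ t ω)]
  exact Mp_le hgbdd hb hσ t ω

lemma Mp_supermartingale (ℱ : Filtration ℕ m0) {g : ℕ → Ω → ℝ}
    (hgadapted : ∀ t, StronglyMeasurable[ℱ (t + 1)] (g (t + 1)))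
    (hgbdd : ∀ t ω, |g (t + 1) ω| ≤ 1)
    (hmds : ∀ t, μ[g (t + 1)|ℱ t] =ᵐ[μ] 0)
    {b σ : ℝ} (hb : 0 < b) (hσ : |σ| = 1) :
    Supermartingale (Mp g b σ) ℱ μ := by
  apply supermartingale_of_setIntegral_succ_le
  · exact fun t => Mp_SM ℱ hgadapted b σ t
  · exact fun t => Mp_integrable ℱ hgadapted hgbdd hb hσ t
  · exact fun t A hA => Mp_setIntegral_step ℱ hgadapted hgbdd hmds hb hσ t hA

lemma main_sure (ℱ : Filtration ℕ m0)
    (γ α δ : ℝ) (hγ : 1 < γ) (hα : α ∈ Set.Ioo (0 : ℝ) 1) (hδ : δ ∈ Set.Ioo (0 : ℝ) 1)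
    (g : ℕ → Ω → ℝ)
    (hgadapted : ∀ t, StronglyMeasurable[ℱ (t + 1)] (g (t + 1)))
    (hgbdd : ∀ t ω, |g (t + 1) ω| ≤ 1)
    (hmds : ∀ t, μ[g (t + 1) | ℱ t] =ᵐ[μ] 0) :
    ENNReal.ofReal (1 - δ) ≤
      μ {ω | ∀ t : ℕ, 1 ≤ t →
          ∀ Z S A : ℝ, Z = ∑ i ∈ Finset.range t, g (i + 1) ω →
            S = ∑ i ∈ Finset.range t, (g (i + 1) ω) ^ 2 →
            A = (Real.log γ + Real.log (1 / α) + Real.log (1 + Real.sqrt (α * S / 2))) ^ 2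
                  / (0.5 * Real.log γ * Real.log (1 / α)) →
            0 < S →
            |Z| ≤ Real.sqrt (2 * S / α) ∨
              |Z| / S - Real.log (1 + |Z| / S) ≤ (1 / (α * S)) * Real.log (A / δ)} := by
  obtain ⟨hδ0, hδ1⟩ := hδ
  set b := Real.log γ with hb_def
  have hb : 0 < b := Real.log_pos hγ
  have hσ1 : |(1:ℝ)| = 1 := abs_one
  have hσ2 : |(-1:ℝ)| = 1 := by rw [abs_neg, abs_one]
  have hc : (0:ℝ) < 2 / δ := by positivity
  have hM0 : ∀ σ : ℝ, (∫ ω, Mp g b σ 0 ω ∂μ) = 1 := by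
    intro σ
    have : (fun ω => Mp g b σ 0 ω) = fun _ => (1:ℝ) := funext (Mp_zero g b σ)
    rw [this, integral_const]
    simp
  have hvbound : ∀ σ : ℝ, |σ| = 1 → Supermartingale (Mp g b σ) ℱ μ →
      μ {ω | ∃ t, 2 / δ ≤ Mp g b σ t ω} ≤ ENNReal.ofReal (δ / 2) := by
    intro σ hσ hsup
    have h := ville hsup (fun n ω => Mp_nonneg g b σ n ω) hc
    rw [hM0 σ] at h
    have : (1:ℝ) / (2 / δ) = δ / 2 := by field_simp
    rwa [this] at h
  have hbad1 := hvbound 1 hσ1 (Mp_supermartingale ℱ hgadapted hgbdd hmds hb hσ1)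
  have hbad2 := hvbound (-1) hσ2 (Mp_supermartingale ℱ hgadapted hgbdd hmds hb hσ2)
  set bad : Set Ω := {ω | ∃ t, 2 / δ ≤ Mp g b 1 t ω} ∪ {ω | ∃ t, 2 / δ ≤ Mp g b (-1) t ω}
    with hbad_def
  have hbadmeas : MeasurableSet bad := by
    have h1 : ∀ σ : ℝ, MeasurableSet {ω | ∃ t, 2 / δ ≤ Mp g b σ t ω} := by
      intro σ
      have : {ω | ∃ t, 2 / δ ≤ Mp g b σ t ω} = ⋃ t, {ω | 2 / δ ≤ Mp g b σ t ω} := by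
        ext ω; simp [Set.mem_iUnion]
      rw [this]
      exact MeasurableSet.iUnion fun t => measurableSet_le measurable_const
        ((Mp_SM ℱ hgadapted b σ t).mono (ℱ.le t)).measurable
    exact (h1 1).union (h1 (-1))
  have hbadle : μ bad ≤ ENNReal.ofReal δ := by
    calc μ bad ≤ μ {ω | ∃ t, 2 / δ ≤ Mp g b 1 t ω} + μ {ω | ∃ t, 2 / δ ≤ Mp g b (-1) t ω} :=
          measure_union_le _ _
    _ ≤ ENNReal.ofReal (δ / 2) + ENNReal.ofReal (δ / 2) := add_le_add hbad1 hbad2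
    _ = ENNReal.ofReal δ := by
        rw [← ENNReal.ofReal_add (by linarith) (by linarith)]
        norm_num
  have hGle : ENNReal.ofReal (1 - δ) ≤ μ badᶜ := by
    rw [prob_compl_eq_one_sub hbadmeas]
    calc ENNReal.ofReal (1 - δ) = 1 - ENNReal.ofReal δ := by
          rw [ENNReal.ofReal_sub _ hδ0.le, ENNReal.ofReal_one]
    _ ≤ 1 - μ bad := tsub_le_tsub_left hbadle 1
  refine le_trans hGle (measure_mono ?_)
  -- inclusion
  intro ω hω
  simp only [hbad_def, Set.mem_compl_iff, Set.mem_union, Set.mem_setOf_eq, not_or,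
    not_exists, not_le] at hω
  obtain ⟨hω1, hω2⟩ := hω
  intro t _ht Z S A hZ hS hA hSpos
  by_cases hle : |Z| ≤ Real.sqrt (2 * S / α)
  · exact Or.inl hle
  right
  push_neg at hle
  rw [hA]
  rcases le_or_gt 0 Z with hZsign | hZsign
  · have habs : |Z| = Z := abs_of_nonneg hZsign
    rw [habs] at hle ⊢
    have hM : (∫ u in Ioo (0:ℝ) 1, Real.exp (T b u * Z - phi (T b u) * S)) < 2 / δ := by
      have h := hω1 t
      simp only [Mp, Zp, Sp, one_mul] at h
      rw [hZ, hS]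
      exact h
    exact core_bound hα ⟨hδ0, hδ1⟩ hb hSpos hle hM
  · have habs : |Z| = -Z := abs_of_neg hZsign
    rw [habs] at hle ⊢
    have hM : (∫ u in Ioo (0:ℝ) 1, Real.exp (T b u * (-Z) - phi (T b u) * S)) < 2 / δ := by
      have h := hω2 t
      simp only [Mp, Zp, Sp, neg_one_mul] at h
      rw [hZ, hS]
      exact h
    exact core_bound hα ⟨hδ0, hδ1⟩ hb hSpos hle hM

end ConcPsiAux

/-- First bound of the main concentration theorem: for a martingale difference sequence
`(g_{t+1})` with `|g_{t+1}| ≤ 1` a.s., with probability at least `1 − δ`,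
simultaneously for all `t ≥ 1` with `S_t = Σ_{i<t} g_{i+1}² > 0`: either
`|Σ_{i<t} g_{i+1}| ≤ √(2S_t/α)`, or `Ψ(|Σ g|/S_t) ≤ (1/(α S_t))·log(A_t/δ)`, where
`A_t = (log γ + log(1/α) + log(1 + √(α S_t/2)))²/(0.5·log γ·log(1/α))` and
`Ψ(x) = x − log(1+x)`. -/
theorem concentration_psi_inverse {Ω : Type*} {m0 : MeasurableSpace Ω}
    {μ : Measure Ω} [IsProbabilityMeasure μ] (ℱ : Filtration ℕ m0)
    (γ α δ : ℝ) (hγ : 1 < γ) (hα : α ∈ Set.Ioo (0 : ℝ) 1) (hδ : δ ∈ Set.Ioo (0 : ℝ) 1)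
    (g : ℕ → Ω → ℝ)
    (hgadapted : ∀ t, StronglyMeasurable[ℱ (t + 1)] (g (t + 1)))
    (hgbdd : ∀ t, ∀ᵐ ω ∂μ, |g (t + 1) ω| ≤ 1)
    (hmds : ∀ t, μ[g (t + 1) | ℱ t] =ᵐ[μ] 0) :
    ENNReal.ofReal (1 - δ) ≤
      μ {ω | ∀ t : ℕ, 1 ≤ t →
          ∀ Z S A : ℝ, Z = ∑ i ∈ Finset.range t, g (i + 1) ω →
            S = ∑ i ∈ Finset.range t, (g (i + 1) ω) ^ 2 →
            A = (Real.log γ + Real.log (1 / α) + Real.log (1 + Real.sqrt (α * S / 2))) ^ 2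
                  / (0.5 * Real.log γ * Real.log (1 / α)) →
            0 < S →
            |Z| ≤ Real.sqrt (2 * S / α) ∨
              |Z| / S - Real.log (1 + |Z| / S) ≤ (1 / (α * S)) * Real.log (A / δ)} := by
  classical
  set g' : ℕ → Ω → ℝ := fun i ω => max (-1) (min 1 (g i ω)) with hg'_def
  have hgadapted' : ∀ t, StronglyMeasurable[ℱ (t + 1)] (g' (t + 1)) := fun t =>
    (measurable_const.max (measurable_const.min (hgadapted t).measurable)).stronglyMeasurable
  have hgbdd' : ∀ t ω, |g' (t + 1) ω| ≤ 1 := by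
    intro t ω
    rw [abs_le]
    constructor
    · exact le_max_left _ _
    · exact max_le (by norm_num) (min_le_left _ _)
  have heq : ∀ t, g (t + 1) =ᵐ[μ] g' (t + 1) := by
    intro t
    filter_upwards [hgbdd t] with ω hω
    obtain ⟨h1, h2⟩ := abs_le.1 hω
    simp only [hg'_def]
    rw [min_eq_right h2, max_eq_right h1]
  have hmds' : ∀ t, μ[g' (t + 1) | ℱ t] =ᵐ[μ] 0 := fun t =>
    (condExp_congr_ae (heq t).symm).trans (hmds t)
  have hmain := ConcPsiAux.main_sure ℱ γ α δ hγ hα hδ g' hgadapted' hgbdd' hmds'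
  have hae : ∀ᵐ ω ∂μ, ∀ t : ℕ, g (t + 1) ω = g' (t + 1) ω := ae_all_iff.2 fun t => heq t
  have hE : μ {ω | ∀ t : ℕ, g (t + 1) ω = g' (t + 1) ω}ᶜ = 0 := by
    rw [Set.compl_setOf]
    exact ae_iff.1 hae
  refine le_trans hmain ?_
  rw [← measure_inter_conull hE]
  apply measure_mono
  rintro ω ⟨h1, h2⟩
  simp only [Set.mem_setOf_eq] at h1 h2 ⊢
  intro t ht Z S A hZ hS hA hSpos
  refine h1 t ht Z S A ?_ ?_ hA hSpos
  · rw [hZ]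
    exact Finset.sum_congr rfl fun i _ => h2 i
  · rw [hS]
    exact Finset.sum_congr rfl fun i _ => by rw [h2 i]
end
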